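/- arXiv:1305.6448 — 2 statements merged into one kernel-verified Lean document; each statement's English description precedes it below -/
import Mathlib

section
/- Let {S_k} be a centered real-valued random walk with finite positive variance started from 0. For any a > 0, if E[S₁² e^{aS₁}] < ∞, then there exists a constant C_a > 0 such that for every b ≥ 0 and every x ≥ 0: P( S_{τ_b} − b > x ) ≤ C_a e^{-ax}, where τ_b := inf{j ≥ 0 : S_j > b}. -/
open MeasureTheory ProbabilityTheory Filter
open scoped ENNReal NNReal Topology

noncomputable section

namespace Statement6Aux

/-! ### The frozen-when-negative gap process -/

/-- `gapSeq b u n` is `b - (u 0 + ⋯ + u (k-1))` run until the first time it becomes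
negative, after which it is frozen. -/
def gapSeq (b : ℝ) (u : ℕ → ℝ) : ℕ → ℝ :=
  fun n => Nat.rec b (fun k ih => if 0 ≤ ih then ih - u k else ih) n

lemma gapSeq_zero (b : ℝ) (u : ℕ → ℝ) : gapSeq b u 0 = b := rfl

lemma gapSeq_succ (b : ℝ) (u : ℕ → ℝ) (n : ℕ) :
    gapSeq b u (n + 1) =
      if 0 ≤ gapSeq b u n then gapSeq b u n - u n else gapSeq b u n := rfl

lemma gapSeq_measurable (b : ℝ) (n : ℕ) :
    Measurable (fun u : ℕ → ℝ => gapSeq b u n) := by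
  induction n with
  | zero => exact measurable_const
  | succ n ih =>
      have h1 : MeasurableSet {u : ℕ → ℝ | 0 ≤ gapSeq b u n} :=
        measurableSet_le measurable_const ih
      simpa only [gapSeq_succ, Pi.sub_apply] using @Measurable.ite _ _ _ _ _ _ (fun u => 0 ≤ gapSeq b u n)
        (fun u => Real.decidableLE _ _) h1 (ih.sub (measurable_pi_apply n)) ih

lemma gapSeq_congr (b : ℝ) {u v : ℕ → ℝ} {n : ℕ} (h : ∀ k < n, u k = v k) :
    gapSeq b u n = gapSeq b v n := by
  induction n with
  | zero => rfl
  | succ n ih =>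
      have h' : ∀ k < n, u k = v k := fun k hk => h k (hk.trans (Nat.lt_succ_self n))
      have hn : u n = v n := h n (Nat.lt_succ_self n)
      rw [gapSeq_succ, gapSeq_succ, ih h', hn]

lemma gapSeq_freeze {b : ℝ} {u : ℕ → ℝ} {n : ℕ} (h : gapSeq b u n < 0) :
    gapSeq b u (n + 1) = gapSeq b u n := by
  rw [gapSeq_succ, if_neg (not_le.mpr h)]

/-- Structure of the gap process: either the partial sums have stayed `≤ b` and the gap
is the current gap, or the walk has crossed `b` and the gap is frozen at the (negative)
crossing value. -/
lemma gapSeq_spec (b : ℝ) (hb : 0 ≤ b) (u : ℕ → ℝ) (n : ℕ) :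
    ((∀ j ≤ n, (∑ k ∈ Finset.range j, u k) ≤ b) ∧
        gapSeq b u n = b - ∑ k ∈ Finset.range n, u k) ∨
      ((∃ j ≤ n, b < ∑ k ∈ Finset.range j, u k) ∧
        gapSeq b u n
          = b - ∑ k ∈ Finset.range (sInf {j : ℕ | b < ∑ k ∈ Finset.range j, u k}), u k ∧
        gapSeq b u n < 0) := by
  induction n with
  | zero =>
      left
      constructor
      · intro j hj
        have : j = 0 := Nat.le_zero.mp hj
        subst this
        simpa using hb
      · simp [gapSeq_zero]
  | succ n ih =>
      rcases ih with ⟨hstay, heq⟩ | ⟨hex, heq, hneg⟩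
      · have hDn0 : 0 ≤ gapSeq b u n := by
          rw [heq]
          have := hstay n le_rfl
          linarith
        have hsucc : gapSeq b u (n+1) = b - ∑ k ∈ Finset.range (n+1), u k := by
          rw [gapSeq_succ, if_pos hDn0, heq, Finset.sum_range_succ]
          ring
        by_cases hnew : (∑ k ∈ Finset.range (n+1), u k) ≤ b
        · left
          refine ⟨?_, hsucc⟩
          intro j hj
          rcases Nat.lt_succ_iff_lt_or_eq.mp (Nat.lt_succ_of_le hj) with hj' | hj'
          · exact hstay j (Nat.lt_succ_iff.mp hj')
          · subst hj'; exact hnew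
        · right
          push_neg at hnew
          have hmem : (n+1) ∈ {j : ℕ | b < ∑ k ∈ Finset.range j, u k} := hnew
          have hinf : sInf {j : ℕ | b < ∑ k ∈ Finset.range j, u k} = n + 1 := by
            refine le_antisymm (Nat.sInf_le hmem) ?_
            refine le_csInf ⟨_, hmem⟩ ?_
            intro m hm
            by_contra hc
            push_neg at hc
            have hmn : m ≤ n := Nat.lt_succ_iff.mp hc
            exact absurd hm (not_lt.mpr (hstay m hmn))
          refine ⟨⟨n+1, le_rfl, hnew⟩, ?_, ?_⟩
          · rw [hinf, hsucc]
          · rw [hsucc]; linarith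
      · have hfr : gapSeq b u (n+1) = gapSeq b u n := gapSeq_freeze hneg
        right
        obtain ⟨j, hj, hjb⟩ := hex
        exact ⟨⟨j, hj.trans (Nat.le_succ n), hjb⟩, by rw [hfr, heq], by rw [hfr]; exact hneg⟩

/-! ### The supersoluton `Phi` -/

/-- The potential function: `exp(-a u)` for `u < 0` (the overshoot region) and
`K - A exp(-θ u)` for `u ≥ 0`. -/
def Phi (a θ A K u : ℝ) : ℝ :=
  if u < 0 then Real.exp (-(a * u)) else K - A * Real.exp (-(θ * u))

lemma Phi_measurable (a θ A K : ℝ) : Measurable (Phi a θ A K) := by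
  unfold Phi
  refine Measurable.ite (measurableSet_lt measurable_id measurable_const) ?_ ?_
  · exact Real.measurable_exp.comp ((measurable_const.mul measurable_id).neg)
  · exact measurable_const.sub
      ((Real.measurable_exp.comp ((measurable_const.mul measurable_id).neg)).const_mul A)

lemma Phi_nonneg {a θ A K : ℝ} (hθ : 0 < θ) (hA : 0 ≤ A) (hAK : A ≤ K) (u : ℝ) :
    0 ≤ Phi a θ A K u := by
  unfold Phi
  split_ifs with h
  · positivity
  · push_neg at h
    have h1 : Real.exp (-(θ * u)) ≤ Real.exp 0 :=
      Real.exp_le_exp.mpr (by nlinarith)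
    rw [Real.exp_zero] at h1
    nlinarith

lemma Phi_le {a θ A K : ℝ} (hA : 0 ≤ A) {u : ℝ} (hu : 0 ≤ u) :
    Phi a θ A K u ≤ K := by
  unfold Phi
  rw [if_neg (not_lt.mpr hu)]
  have := Real.exp_pos (-(θ * u))
  nlinarith

/-! ### Analytic lemmas about the step distribution -/

lemma one_lt_integral_exp {μ : Measure ℝ} [IsProbabilityMeasure μ] {θ : ℝ} (hθ : 0 < θ)
    (hexpθ : Integrable (fun s => Real.exp (θ * s)) μ)
    (hid : Integrable (fun s : ℝ => s) μ)
    (hmean : ∫ s, s ∂μ = 0)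
    (hnz : ¬ (∀ᵐ s ∂μ, s = 0)) :
    1 < ∫ s, Real.exp (θ * s) ∂μ := by
  have hint1 : Integrable (fun s => Real.exp (θ * s) - 1) μ := hexpθ.sub (integrable_const 1)
  have hintθs : Integrable (fun s : ℝ => θ * s) μ := hid.const_mul θ
  have hgint : Integrable (fun s => Real.exp (θ * s) - 1 - θ * s) μ := hint1.sub hintθs
  have hgnn : ∀ s, 0 ≤ Real.exp (θ * s) - 1 - θ * s := fun s => by
    have := Real.add_one_le_exp (θ * s); linarith
  have hgI : ∫ s, (Real.exp (θ * s) - 1 - θ * s) ∂μ = (∫ s, Real.exp (θ * s) ∂μ) - 1 := by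
    rw [integral_sub hint1 hintθs, integral_sub hexpθ (integrable_const 1),
      integral_const_mul, hmean]
    simp
  by_contra hle
  push_neg at hle
  have h0' : ∫ s, (Real.exp (θ * s) - 1 - θ * s) ∂μ = 0 :=
    le_antisymm (by rw [hgI]; linarith) (integral_nonneg hgnn)
  have hgz := (integral_eq_zero_iff_of_nonneg hgnn hgint).mp h0'
  apply hnz
  filter_upwards [hgz] with s hs
  by_contra hs0
  have hne : θ * s ≠ 0 := mul_ne_zero (ne_of_gt hθ) hs0
  have hlt := Real.add_one_lt_exp hne
  have hs' : Real.exp (θ * s) - 1 - θ * s = 0 := hs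
  linarith

lemma measure_Ioi_pos {μ : Measure ℝ} [IsProbabilityMeasure μ]
    (hid : Integrable (fun s : ℝ => s) μ) (hmean : ∫ s, s ∂μ = 0)
    (hnz : ¬ (∀ᵐ s ∂μ, s = 0)) : 0 < μ (Set.Ioi 0) := by
  by_contra h
  push_neg at h
  have h0 : μ (Set.Ioi 0) = 0 := le_antisymm (by simpa using h) zero_le
  have hae : ∀ᵐ s ∂μ, s ≤ 0 := by
    rw [ae_iff]
    convert h0 using 2
    ext s
    simp [not_le]
  have hnn : 0 ≤ᵐ[μ] (fun s => -s) := hae.mono fun s hs => by simpa using hs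
  have hint' : Integrable (fun s : ℝ => -s) μ := hid.neg
  have hI0 : ∫ s, -s ∂μ = 0 := by rw [integral_neg, hmean, neg_zero]
  have := (integral_eq_zero_iff_of_nonneg_ae hnn hint').mp hI0
  apply hnz
  filter_upwards [this] with s hs
  have : -s = 0 := hs
  linarith

/-- Existence of the threshold `y₂` with the two branch properties. -/
lemma exists_y2 {μ : Measure ℝ} [IsProbabilityMeasure μ] {θ : ℝ}
    (hexpθ : Integrable (fun s => Real.exp (θ * s)) μ)
    (hJ : 1 < ∫ s, Real.exp (θ * s) ∂μ)
    (hpos : 0 < μ (Set.Ioi 0)) :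
    ∃ y₂ β₀ c₂ : ℝ, 0 ≤ y₂ ∧ 0 < β₀ ∧ 0 < c₂ ∧
      (∀ y, y₂ ≤ y → 1 + β₀ ≤ ∫ s in Set.Iic y, Real.exp (θ * s) ∂μ) ∧
      (∀ y, 0 ≤ y → y < y₂ → c₂ ≤ (μ (Set.Ioi y)).toReal) := by
  set f : ℝ → ℝ := fun s => Real.exp (θ * s) with hf
  have hfnn : ∀ s, 0 ≤ f s := fun s => (Real.exp_pos _).le
  set h : ℝ → ℝ := fun y => ∫ s in Set.Iic y, f s ∂μ with hh
  have hmono : ∀ ⦃y y'⦄, y ≤ y' → h y ≤ h y' := by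
    intro y y' hyy
    exact setIntegral_mono_set hexpθ.integrableOn (ae_of_all _ hfnn)
      (HasSubset.Subset.eventuallyLE (Set.Iic_subset_Iic.mpr hyy))
  -- dominated convergence helper
  have hDC : ∀ (g : ℕ → ℝ),
      (∀ᵐ s ∂μ, Tendsto (fun n => Set.indicator (Set.Iic (g n)) f s) atTop (𝓝 (f s))) →
      Tendsto (fun n => h (g n)) atTop (𝓝 (∫ s, f s ∂μ)) := by
    intro g hg
    have heq : ∀ n, h (g n) = ∫ s, Set.indicator (Set.Iic (g n)) f s ∂μ := fun n =>
      (integral_indicator measurableSet_Iic).symm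
    simp only [heq]
    refine tendsto_integral_of_dominated_convergence f
      (fun n => hexpθ.aestronglyMeasurable.indicator measurableSet_Iic) hexpθ
      (fun n => ae_of_all _ fun s => ?_) hg
    rw [Real.norm_eq_abs, abs_of_nonneg (Set.indicator_nonneg (fun x _ => hfnn x) s)]
    exact Set.indicator_le_self' (fun x _ => hfnn x) s
  -- there is a nonnegative level with h > 1
  have hex1 : ∃ n : ℕ, 1 < h n := by
    have htd : Tendsto (fun n : ℕ => h n) atTop (𝓝 (∫ s, f s ∂μ)) := by
      refine hDC (fun n => (n : ℝ)) (ae_of_all _ fun s => ?_)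
      refine tendsto_atTop_of_eventually_const (i₀ := ⌈s⌉₊) fun n hn => ?_
      refine Set.indicator_of_mem ?_ f
      exact Set.mem_Iic.mpr ((Nat.le_ceil s).trans (Nat.cast_le.mpr hn))
    exact (htd.eventually (eventually_gt_nhds hJ)).exists
  by_cases hcase : ∃ y, 0 ≤ y ∧ 1 < h y ∧ 0 < μ (Set.Ici y)
  · obtain ⟨y₂, hy₂0, hy₂h, hy₂m⟩ := hcase
    refine ⟨y₂, h y₂ - 1, (μ (Set.Ici y₂)).toReal, hy₂0, by linarith,
      ENNReal.toReal_pos hy₂m.ne' (measure_ne_top μ _), ?_, ?_⟩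
    · intro y hy
      have := hmono hy
      linarith
    · intro y hy0 hy
      have hsub : Set.Ici y₂ ⊆ Set.Ioi y := fun s hs => lt_of_lt_of_le hy hs
      exact ENNReal.toReal_mono (measure_ne_top μ _) (measure_mono hsub)
  · exfalso
    push_neg at hcase
    have hBzero : ∀ y, 0 ≤ y → 1 < h y → μ (Set.Ici y) = 0 := fun y h1 h2 =>
      le_antisymm (hcase y h1 h2) zero_le
    obtain ⟨n₀, hn₀⟩ := hex1
    set SS : Set ℝ := {y | 0 ≤ y ∧ μ (Set.Ici y) = 0} with hSS
    have hSSne : SS.Nonempty :=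
      ⟨(n₀ : ℝ), ⟨Nat.cast_nonneg n₀, hBzero _ (Nat.cast_nonneg n₀) hn₀⟩⟩
    have hSSbdd : BddBelow SS := ⟨0, fun y hy => hy.1⟩
    set t := sInf SS with ht
    have ht0 : 0 ≤ t := le_csInf hSSne fun y hy => hy.1
    -- find ε > 0 with μ (Ici ε) > 0
    have hexε : ∃ n : ℕ, 0 < μ (Set.Ici (1 / ((n : ℝ) + 1))) := by
      by_contra hc
      push_neg at hc
      have hIoi : Set.Ioi (0 : ℝ) = ⋃ n : ℕ, Set.Ici (1 / ((n : ℝ) + 1)) := by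
        ext s
        simp only [Set.mem_Ioi, Set.mem_iUnion, Set.mem_Ici]
        constructor
        · intro hs
          obtain ⟨n, hn⟩ := exists_nat_one_div_lt hs
          exact ⟨n, hn.le⟩
        · rintro ⟨n, hn⟩
          have : (0 : ℝ) < 1 / ((n : ℝ) + 1) := by positivity
          linarith
      have : μ (Set.Ioi (0 : ℝ)) = 0 := by
        rw [hIoi]
        exact measure_iUnion_null fun n => le_antisymm (hc n) zero_le
      exact absurd this (ne_of_gt hpos)
    obtain ⟨nε, hnε⟩ := hexε
    have hε0 : (0 : ℝ) < 1 / ((nε : ℝ) + 1) := by positivity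
    have htε : 1 / ((nε : ℝ) + 1) ≤ t := by
      refine le_csInf hSSne ?_
      intro y hy
      by_contra hlt
      push_neg at hlt
      have h1 : 0 < μ (Set.Ici y) :=
        lt_of_lt_of_le hnε (measure_mono (Set.Ici_subset_Ici.mpr hlt.le))
      exact h1.ne' hy.2
    have htpos : 0 < t := lt_of_lt_of_le hε0 htε
    -- μ (Ioi t) = 0
    have hIoit : μ (Set.Ioi t) = 0 := by
      have hun : Set.Ioi t = ⋃ n : ℕ, Set.Ici (t + 1 / ((n : ℝ) + 1)) := by
        ext s
        simp only [Set.mem_Ioi, Set.mem_iUnion, Set.mem_Ici]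
        constructor
        · intro hs
          obtain ⟨n, hn⟩ := exists_nat_one_div_lt (sub_pos.mpr hs)
          exact ⟨n, by linarith⟩
        · rintro ⟨n, hn⟩
          have : (0 : ℝ) < 1 / ((n : ℝ) + 1) := by positivity
          linarith
      rw [hun]
      refine measure_iUnion_null fun n => ?_
      have h1 : (0 : ℝ) < 1 / ((n : ℝ) + 1) := by positivity
      obtain ⟨y, hySS, hyt⟩ := exists_lt_of_csInf_lt hSSne (by linarith : t < t + 1 / ((n : ℝ) + 1))
      exact measure_mono_null (Set.Ici_subset_Ici.mpr hyt.le) hySS.2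
    -- h t equals the full integral
    have hht : h t = ∫ s, f s ∂μ := by
      have hadd := integral_add_compl (measurableSet_Iic (a := t)) hexpθ
      have hc : (Set.Iic t)ᶜ = Set.Ioi t := Set.compl_Iic
      rw [hc] at hadd
      have hz : ∫ s in Set.Ioi t, f s ∂μ = 0 := by
        rw [Measure.restrict_eq_zero.mpr hIoit]
        exact integral_zero_measure _
      rw [hh]
      linarith [hadd, hz]
    have h1t : 1 < h t := by rw [hht]; exact hJ
    have hIcit : μ (Set.Ici t) = 0 := hBzero t ht0 h1t
    have haelt : ∀ᵐ s ∂μ, s < t := by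
      rw [ae_iff]
      convert hIcit using 2
      ext s
      simp [not_lt]
    -- approach t from below
    have htt : Tendsto (fun n : ℕ => h (t - 1 / ((n : ℝ) + 1))) atTop (𝓝 (∫ s, f s ∂μ)) := by
      refine hDC _ ?_
      filter_upwards [haelt] with s hs
      obtain ⟨N, hN⟩ := exists_nat_one_div_lt (sub_pos.mpr hs)
      refine tendsto_atTop_of_eventually_const (i₀ := N) fun n hn => ?_
      refine Set.indicator_of_mem (Set.mem_Iic.mpr ?_) f
      have hle : 1 / ((n : ℝ) + 1) ≤ 1 / ((N : ℝ) + 1) := by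
        apply one_div_le_one_div_of_le
        · positivity
        · exact_mod_cast Nat.succ_le_succ hn
      linarith
    have hev1 : ∀ᶠ n : ℕ in atTop, 1 < h (t - 1 / ((n : ℝ) + 1)) :=
      htt.eventually (eventually_gt_nhds hJ)
    have hev2 : ∀ᶠ n : ℕ in atTop, 1 / ((n : ℝ) + 1) ≤ t := by
      have hto : Tendsto (fun n : ℕ => 1 / ((n : ℝ) + 1)) atTop (𝓝 0) :=
        tendsto_one_div_add_atTop_nhds_zero_nat
      exact hto.eventually (eventually_le_nhds htpos)
    obtain ⟨n, h1n, h2n⟩ := (hev1.and hev2).exists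
    have hy' : 0 ≤ t - 1 / ((n : ℝ) + 1) := by linarith
    have hz : μ (Set.Ici (t - 1 / ((n : ℝ) + 1))) = 0 := hBzero _ hy' h1n
    have hmem : (t - 1 / ((n : ℝ) + 1)) ∈ SS := ⟨hy', hz⟩
    have hle := csInf_le hSSbdd hmem
    have hpos' : (0 : ℝ) < 1 / ((n : ℝ) + 1) := by positivity
    rw [← ht] at hle
    linarith

/-! ### The supersolution inequality -/

set_option maxHeartbeats 2000000 in
lemma NSH {μ : Measure ℝ} [IsProbabilityMeasure μ] {a θ A K y₂ β₀ c₂ : ℝ}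
    (ha : 0 < a) (hθ : 0 < θ) (hθa : θ ≤ a) (hA : 0 < A) (hβ : 0 < β₀) (hc : 0 < c₂)
    (hexpa : Integrable (fun s => Real.exp (a * s)) μ)
    (hexpθ : Integrable (fun s => Real.exp (θ * s)) μ)
    (hAβ : (∫ s, Real.exp (a * s) ∂μ) ≤ A * β₀)
    (hK : A + ((∫ s, Real.exp (a * s) ∂μ) + A) / c₂ ≤ K)
    (H2 : ∀ y, y₂ ≤ y → 1 + β₀ ≤ ∫ s in Set.Iic y, Real.exp (θ * s) ∂μ)
    (H1 : ∀ y, 0 ≤ y → y < y₂ → c₂ ≤ (μ (Set.Ioi y)).toReal)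
    {y : ℝ} (hy : 0 ≤ y) :
    Integrable (fun s => Phi a θ A K (y - s)) μ ∧
      ∫ s, Phi a θ A K (y - s) ∂μ ≤ Phi a θ A K y := by
  set E₀ := ∫ s, Real.exp (a * s) ∂μ with hE₀
  have hE₀nn : 0 ≤ E₀ := integral_nonneg fun s => (Real.exp_pos _).le
  have hKA : A ≤ K := by
    have h1 : 0 ≤ (E₀ + A) / c₂ := by positivity
    linarith
  have hK0 : 0 < K := lt_of_lt_of_le hA hKA
  set f₁ : ℝ → ℝ := (Set.Ioi y).indicator (fun s => Real.exp (-(a * y)) * Real.exp (a * s))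
    with hf₁
  set f₂ : ℝ → ℝ := (Set.Iic y).indicator
      (fun s => K - (A * Real.exp (-(θ * y))) * Real.exp (θ * s)) with hf₂
  have hsplit : ∀ s, Phi a θ A K (y - s) = f₁ s + f₂ s := by
    intro s
    by_cases hs : y < s
    · have h1 : y - s < 0 := by linarith
      have h2 : s ∉ Set.Iic y := not_le.mpr hs
      rw [hf₁, hf₂]
      rw [Set.indicator_of_mem (Set.mem_Ioi.mpr hs), Set.indicator_of_notMem h2]
      unfold Phi
      rw [if_pos h1]
      have harg : -(a * (y - s)) = -(a * y) + a * s := by ring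
      rw [harg, Real.exp_add, add_zero]
    · push_neg at hs
      have h1 : ¬ (y - s < 0) := by push_neg; linarith
      have h2 : s ∉ Set.Ioi y := by simp [Set.mem_Ioi, not_lt.mpr hs]
      rw [hf₁, hf₂]
      rw [Set.indicator_of_notMem h2, Set.indicator_of_mem (Set.mem_Iic.mpr hs)]
      unfold Phi
      rw [if_neg h1]
      have harg : -(θ * (y - s)) = -(θ * y) + θ * s := by ring
      rw [harg, Real.exp_add, zero_add]
      ring
  have hint1 : Integrable f₁ μ := (hexpa.const_mul _).indicator measurableSet_Ioi
  have hint2 : Integrable f₂ μ :=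
    ((integrable_const K).sub (hexpθ.const_mul _)).indicator measurableSet_Iic
  have hfeq : (fun s => Phi a θ A K (y - s)) = fun s => f₁ s + f₂ s := funext hsplit
  have hint : Integrable (fun s => Phi a θ A K (y - s)) μ := by
    rw [hfeq]; exact hint1.add hint2
  refine ⟨hint, ?_⟩
  set I1 := ∫ s in Set.Ioi y, Real.exp (a * s) ∂μ with hI1
  set J1 := ∫ s in Set.Iic y, Real.exp (θ * s) ∂μ with hJ1
  set r := (μ (Set.Ioi y)).toReal with hr
  have hIic : (μ (Set.Iic y)).toReal = 1 - r := by
    have h1 : μ (Set.Iic y) = 1 - μ (Set.Ioi y) := by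
      rw [← Set.compl_Ioi, measure_compl measurableSet_Ioi (measure_ne_top μ _), measure_univ]
    rw [h1, ENNReal.toReal_sub_of_le prob_le_one (by simp), ENNReal.toReal_one]
  have hIval : ∫ s, Phi a θ A K (y - s) ∂μ
      = Real.exp (-(a * y)) * I1 + (K * (1 - r) - (A * Real.exp (-(θ * y))) * J1) := by
    rw [hfeq, integral_add hint1 hint2]
    congr 1
    · rw [hf₁, integral_indicator measurableSet_Ioi, integral_const_mul, hI1]
    · rw [hf₂, integral_indicator measurableSet_Iic]
      rw [integral_sub (integrableOn_const (C := K) (s := Set.Iic y) (measure_ne_top μ _))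
        ((hexpθ.const_mul _).integrableOn)]
      rw [setIntegral_const, smul_eq_mul, integral_const_mul, measureReal_def, hIic, hJ1]
      ring
  have hr0 : 0 ≤ r := ENNReal.toReal_nonneg
  have hI1nn : 0 ≤ I1 := setIntegral_nonneg measurableSet_Ioi fun s _ => (Real.exp_pos _).le
  have hI1le : I1 ≤ E₀ :=
    setIntegral_le_integral hexpa (ae_of_all _ fun s => (Real.exp_pos _).le)
  have hJnn : 0 ≤ J1 := setIntegral_nonneg measurableSet_Iic fun s _ => (Real.exp_pos _).le
  have he1 : Real.exp (-(a * y)) ≤ Real.exp (-(θ * y)) :=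
    Real.exp_le_exp.mpr (by nlinarith)
  have he2 : Real.exp (-(θ * y)) ≤ 1 := by
    rw [← Real.exp_zero]
    exact Real.exp_le_exp.mpr (by nlinarith)
  have he1p : 0 < Real.exp (-(a * y)) := Real.exp_pos _
  have he2p : 0 < Real.exp (-(θ * y)) := Real.exp_pos _
  have hPhiy : Phi a θ A K y = K - A * Real.exp (-(θ * y)) := if_neg (not_lt.mpr hy)
  have hmain : Real.exp (-(a * y)) * I1
      ≤ K * r + A * Real.exp (-(θ * y)) * J1 - A * Real.exp (-(θ * y)) := by
    by_cases hyy : y₂ ≤ y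
    · have hJ2 : 1 + β₀ ≤ J1 := H2 y hyy
      have k1 : Real.exp (-(a * y)) * I1 ≤ Real.exp (-(θ * y)) * E₀ :=
        mul_le_mul he1 hI1le hI1nn he2p.le
      have k2 : Real.exp (-(θ * y)) * E₀ ≤ Real.exp (-(θ * y)) * (A * β₀) :=
        mul_le_mul_of_nonneg_left hAβ he2p.le
      have k3 : A * Real.exp (-(θ * y)) * β₀ ≤ A * Real.exp (-(θ * y)) * (J1 - 1) :=
        mul_le_mul_of_nonneg_left (by linarith) (by positivity)
      have k4 : 0 ≤ K * r := by positivity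
      nlinarith [k1, k2, k3, k4]
    · push_neg at hyy
      have hc2 : c₂ ≤ r := H1 y hy hyy
      have k1 : Real.exp (-(a * y)) * I1 ≤ E₀ := by nlinarith
      have k5 : K * c₂ ≤ K * r := mul_le_mul_of_nonneg_left hc2 hK0.le
      have k6 : A * Real.exp (-(θ * y)) ≤ A := by nlinarith
      have k7 : -(A * Real.exp (-(θ * y))) ≤ A * Real.exp (-(θ * y)) * (J1 - 1) := by
        nlinarith [mul_nonneg hA.le he2p.le]
      have k8 : E₀ + A ≤ K * c₂ := by
        have h9 : (E₀ + A) / c₂ ≤ K - A := by linarith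
        have h10 := (div_le_iff₀ hc).mp h9
        nlinarith [mul_nonneg hA.le hc.le]
      nlinarith [k1, k5, k6, k7, k8]
  rw [hIval, hPhiy]
  nlinarith [hmain]

end Statement6Aux


open Statement6Aux

set_option maxHeartbeats 2000000

/-- **Lemma 2.1, inequality (2.8)** (exponential bound on the overshoot).  Let `S` be a
centered random walk with finite positive variance started from `0` (so `S_n = Σ_{j<n} ξ_j`
with `ξ` i.i.d.).  For any `a > 0`, if `E[S₁² e^{a S₁}] < ∞` then there is `C_a > 0` such
that for every `b ≥ 0` and `x ≥ 0`: `P(S_{τ_b} − b > x) ≤ C_a e^{-a x}`, where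
`τ_b := inf{j ≥ 0 : S_j > b}`. -/
theorem statement6 {Ω : Type} [MeasurableSpace Ω] (P : Measure Ω) [IsProbabilityMeasure P]
    (ξ : ℕ → Ω → ℝ) (hmeas : ∀ i, Measurable (ξ i))
    (hindep : iIndepFun ξ P)
    (hident : ∀ i, P.map (ξ i) = P.map (ξ 0))
    (hint : Integrable (ξ 0) P) (hcent : ∫ ω, ξ 0 ω ∂P = 0)
    (hL2 : MemLp (ξ 0) 2 P) (hvar : 0 < variance (ξ 0) P)
    (a : ℝ) (ha : 0 < a)
    (hexp : Integrable (fun ω => (ξ 0 ω) ^ 2 * Real.exp (a * ξ 0 ω)) P) :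
    ∃ C > (0:ℝ), ∀ b : ℝ, 0 ≤ b → ∀ x : ℝ, 0 ≤ x →
      P {ω | x <
          (∑ j ∈ Finset.range (sInf {j : ℕ | b < ∑ k ∈ Finset.range j, ξ k ω}), ξ j ω) - b}
        ≤ ENNReal.ofReal (C * Real.exp (-(a * x))) := by
  classical
  set μ : Measure ℝ := P.map (ξ 0) with hμ
  haveI hμP : IsProbabilityMeasure μ := Measure.isProbabilityMeasure_map (hmeas 0).aemeasurable
  -- transfer the hypotheses to the step distribution μ
  have hexpP : Integrable (fun ω => Real.exp (a * ξ 0 ω)) P := by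
    refine Integrable.mono' ((integrable_const (Real.exp a)).add hexp)
      (Real.measurable_exp.comp (measurable_const.mul (hmeas 0))).aestronglyMeasurable
      (ae_of_all _ fun ω => ?_)
    rw [Real.norm_eq_abs, abs_of_pos (Real.exp_pos _)]
    simp only [Pi.add_apply]
    rcases le_or_gt (ξ 0 ω) 1 with hs | hs
    · have h1 : a * ξ 0 ω ≤ a * 1 := mul_le_mul_of_nonneg_left hs ha.le
      have h2 := Real.exp_le_exp.mpr h1
      have h3 : 0 ≤ (ξ 0 ω) ^ 2 * Real.exp (a * ξ 0 ω) :=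
        mul_nonneg (sq_nonneg _) (Real.exp_pos _).le
      rw [mul_one] at h2
      linarith
    · have h1 : (1:ℝ) ≤ (ξ 0 ω) ^ 2 := by nlinarith
      have h2 : Real.exp (a * ξ 0 ω) ≤ (ξ 0 ω) ^ 2 * Real.exp (a * ξ 0 ω) := by
        nlinarith [Real.exp_pos (a * ξ 0 ω)]
      have h4 := Real.exp_pos a
      linarith
  have hexpμ : Integrable (fun s => Real.exp (a * s)) μ := by
    have hgm : AEStronglyMeasurable (fun s : ℝ => Real.exp (a * s)) (P.map (ξ 0)) :=
      (Real.measurable_exp.comp (measurable_const.mul measurable_id)).aestronglyMeasurable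
    exact (integrable_map_measure hgm (hmeas 0).aemeasurable).mpr hexpP
  have hidμ : Integrable (fun s : ℝ => s) μ := by
    have hgm : AEStronglyMeasurable (fun s : ℝ => s) (P.map (ξ 0)) :=
      measurable_id.aestronglyMeasurable
    exact (integrable_map_measure hgm (hmeas 0).aemeasurable).mpr hint
  have hmeanμ : ∫ s, s ∂μ = 0 := by
    have hgm : AEStronglyMeasurable (fun s : ℝ => s) (P.map (ξ 0)) :=
      measurable_id.aestronglyMeasurable
    exact (integral_map (hmeas 0).aemeasurable hgm).trans hcent
  have hnzμ : ¬ (∀ᵐ s ∂μ, s = 0) := by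
    intro hae
    rw [hμ, ae_map_iff (hmeas 0).aemeasurable (measurableSet_eq)] at hae
    have e2 : (fun ω => (ξ 0 ω) ^ 2) =ᵐ[P] (fun _ => (0:ℝ)) := hae.mono fun ω h => by simp [h]
    have hv : variance (ξ 0) P = 0 := by
      rw [variance_eq_sub hL2]
      have e3 : P[ξ 0 ^ 2] = (0:ℝ) := by
        rw [show (ξ 0 ^ 2 : Ω → ℝ) = fun ω => (ξ 0 ω) ^ 2 from rfl]
        rw [integral_congr_ae e2, integral_zero]
      rw [e3, show P[ξ 0] = (0:ℝ) from hcent]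
      ring
    rw [hv] at hvar
    exact lt_irrefl _ hvar
  set θ := a / 2 with hθdef
  have hθ : 0 < θ := by positivity
  have hθa : θ ≤ a := by rw [hθdef]; linarith
  have hexpθμ : Integrable (fun s => Real.exp (θ * s)) μ := by
    refine Integrable.mono' ((integrable_const 1).add hexpμ)
      (Real.measurable_exp.comp (measurable_const.mul measurable_id)).aestronglyMeasurable
      (ae_of_all _ fun s => ?_)
    rw [Real.norm_eq_abs, abs_of_pos (Real.exp_pos _)]
    simp only [Pi.add_apply]
    rcases le_or_gt 0 s with hs | hs
    · have h1 : θ * s ≤ a * s := mul_le_mul_of_nonneg_right hθa hs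
      have h2 := Real.exp_le_exp.mpr h1
      have h3 := Real.exp_pos (a * s)
      linarith
    · have h1 : θ * s ≤ 0 := mul_nonpos_of_nonneg_of_nonpos hθ.le hs.le
      have h2 := Real.exp_le_exp.mpr h1
      rw [Real.exp_zero] at h2
      have h3 := Real.exp_pos (a * s)
      linarith
  have hJ : 1 < ∫ s, Real.exp (θ * s) ∂μ :=
    one_lt_integral_exp hθ hexpθμ hidμ hmeanμ hnzμ
  have hposμ : 0 < μ (Set.Ioi 0) := measure_Ioi_pos hidμ hmeanμ hnzμ
  obtain ⟨y₂, β₀, c₂, hy₂0, hβ, hc, H2, H1⟩ := exists_y2 hexpθμ hJ hposμ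
  set E₀ := ∫ s, Real.exp (a * s) ∂μ with hE₀def
  have hE₀pos : 0 < E₀ := by
    rw [hE₀def]
    refine (integral_pos_iff_support_of_nonneg_ae
      (ae_of_all _ fun s => (Real.exp_pos _).le) hexpμ).mpr ?_
    have hsupp : Function.support (fun s : ℝ => Real.exp (a * s)) = Set.univ := by
      ext s
      simp [Function.mem_support, Real.exp_ne_zero]
    rw [hsupp, measure_univ]
    exact one_pos
  set A := E₀ / β₀ with hAdef
  have hA : 0 < A := div_pos hE₀pos hβ
  set K := A + (E₀ + A) / c₂ with hKdef
  have hK0 : 0 < K := by positivity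
  have hKA : A ≤ K := by
    rw [hKdef]
    have h1 : 0 ≤ (E₀ + A) / c₂ := by positivity
    linarith
  have hAβ : E₀ ≤ A * β₀ := by
    rw [hAdef, div_mul_cancel₀ _ (ne_of_gt hβ)]
  have hKK : A + (E₀ + A) / c₂ ≤ K := le_of_eq rfl
  have hNSH : ∀ y : ℝ, 0 ≤ y →
      ∫⁻ s, ENNReal.ofReal (Phi a θ A K (y - s)) ∂μ ≤ ENNReal.ofReal (Phi a θ A K y) := by
    intro y hy
    obtain ⟨hi, hle⟩ := NSH ha hθ hθa hA hβ hc hexpμ hexpθμ hAβ hKK H2 H1 hy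
    rw [← ofReal_integral_eq_lintegral_ofReal hi
      (ae_of_all _ fun s => Phi_nonneg hθ hA.le hKA _)]
    exact ENNReal.ofReal_le_ofReal hle
  refine ⟨K, hK0, ?_⟩
  intro b hb x hx
  set D : ℕ → Ω → ℝ := fun n ω => gapSeq b (fun k => ξ k ω) n with hD
  have hDmeas : ∀ n, Measurable (D n) := fun n =>
    (gapSeq_measurable b n).comp (measurable_pi_lambda _ fun k => hmeas k)
  -- the supermartingale bound
  have key : ∀ n, ∫⁻ ω, ENNReal.ofReal (Phi a θ A K (D n ω)) ∂P ≤ ENNReal.ofReal K := by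
    intro n
    induction n with
    | zero =>
        have hD0 : ∀ ω, D 0 ω = b := fun ω => rfl
        simp only [hD0]
        rw [lintegral_const, measure_univ, mul_one]
        exact ENNReal.ofReal_le_ofReal (Phi_le hA.le hb)
    | succ n ih =>
        set V : Ω → (↥(Finset.range n) → ℝ) := fun ω i => ξ i ω with hV
        set W : Ω → ℝ := ξ n with hW
        have hVmeas : Measurable V := measurable_pi_lambda _ fun i => hmeas i
        have hWmeas : Measurable W := hmeas n
        have hdisj : Disjoint (Finset.range n) ({n} : Finset ℕ) := by
          rw [Finset.disjoint_left]
          intro m hm hn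
          rw [Finset.mem_range] at hm
          rw [Finset.mem_singleton] at hn
          omega
        have hIndep : IndepFun V W P := by
          have h := hindep.indepFun_finset (Finset.range n) {n} hdisj hmeas
          exact h.comp (measurable_id)
            (measurable_pi_apply (⟨n, Finset.mem_singleton_self n⟩ : ({n} : Finset ℕ)))
        have hmap : P.map (fun ω => (V ω, W ω)) = (P.map V).prod (P.map W) :=
          (indepFun_iff_map_prod_eq_prod_map_map hVmeas.aemeasurable
            hWmeas.aemeasurable).mp hIndep
        haveI : IsProbabilityMeasure (P.map V) :=
          Measure.isProbabilityMeasure_map hVmeas.aemeasurable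
        have hmapW : P.map W = μ := by rw [hμ]; exact hident n
        set pad : (↥(Finset.range n) → ℝ) → ℕ → ℝ :=
          fun v k => if h : k ∈ Finset.range n then v ⟨k, h⟩ else 0 with hpad
        have hpadMeas : Measurable pad := by
          apply measurable_pi_lambda
          intro k
          by_cases h : k ∈ Finset.range n
          · simpa only [hpad, dif_pos h] using measurable_pi_apply _
          · simpa only [hpad, dif_neg h] using measurable_const
        set dnv : (↥(Finset.range n) → ℝ) → ℝ :=
          fun v => gapSeq b (pad v) n with hdnv
        have hdnvMeas : Measurable dnv := (gapSeq_measurable b n).comp hpadMeas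
        have hDn_eq : ∀ ω, D n ω = dnv (V ω) := by
          intro ω
          apply gapSeq_congr
          intro k hk
          simp only [hpad, hdnv, dif_pos (Finset.mem_range.mpr hk)]
          rfl
        set F : ((↥(Finset.range n) → ℝ) × ℝ) → ℝ≥0∞ :=
          fun p => ENNReal.ofReal (Phi a θ A K
            (if 0 ≤ dnv p.1 then dnv p.1 - p.2 else dnv p.1)) with hF
        have hFmeas : Measurable F := by
          apply ENNReal.measurable_ofReal.comp
          apply (Phi_measurable a θ A K).comp
          exact Measurable.ite
            (measurableSet_le measurable_const (hdnvMeas.comp measurable_fst))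
            ((hdnvMeas.comp measurable_fst).sub measurable_snd)
            (hdnvMeas.comp measurable_fst)
        have hpt : ∀ ω, ENNReal.ofReal (Phi a θ A K (D (n+1) ω)) = F (V ω, W ω) := by
          intro ω
          have h1 : D (n+1) ω = if 0 ≤ D n ω then D n ω - ξ n ω else D n ω :=
            gapSeq_succ _ _ _
          rw [h1, hDn_eq ω]
        calc ∫⁻ ω, ENNReal.ofReal (Phi a θ A K (D (n+1) ω)) ∂P
            = ∫⁻ ω, F (V ω, W ω) ∂P := lintegral_congr hpt
          _ = ∫⁻ p, F p ∂(P.map (fun ω => (V ω, W ω))) :=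
              (lintegral_map hFmeas (hVmeas.prodMk hWmeas)).symm
          _ = ∫⁻ p, F p ∂((P.map V).prod μ) := by rw [hmap, hmapW]
          _ = ∫⁻ v, ∫⁻ w, F (v, w) ∂μ ∂(P.map V) := lintegral_prod _ hFmeas.aemeasurable
          _ ≤ ∫⁻ v, ENNReal.ofReal (Phi a θ A K (dnv v)) ∂(P.map V) := by
              refine lintegral_mono fun v => ?_
              by_cases hv : 0 ≤ dnv v
              · have heq : ∀ w, F (v, w) = ENNReal.ofReal (Phi a θ A K (dnv v - w)) :=
                  fun w => by simp only [hF, if_pos hv]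
                calc ∫⁻ w, F (v, w) ∂μ
                    = ∫⁻ w, ENNReal.ofReal (Phi a θ A K (dnv v - w)) ∂μ :=
                      lintegral_congr heq
                  _ ≤ ENNReal.ofReal (Phi a θ A K (dnv v)) := hNSH _ hv
              · have heq : ∀ w, F (v, w) = ENNReal.ofReal (Phi a θ A K (dnv v)) :=
                  fun w => by simp only [hF, if_neg hv]
                calc ∫⁻ w, F (v, w) ∂μ
                    = ∫⁻ _, ENNReal.ofReal (Phi a θ A K (dnv v)) ∂μ := lintegral_congr heq
                  _ ≤ ENNReal.ofReal (Phi a θ A K (dnv v)) := by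
                      rw [lintegral_const, measure_univ, mul_one]
          _ = ∫⁻ ω, ENNReal.ofReal (Phi a θ A K (dnv (V ω))) ∂P :=
              lintegral_map (ENNReal.measurable_ofReal.comp
                ((Phi_measurable a θ A K).comp hdnvMeas)) hVmeas
          _ = ∫⁻ ω, ENNReal.ofReal (Phi a θ A K (D n ω)) ∂P := by
              refine lintegral_congr fun ω => ?_
              rw [hDn_eq ω]
          _ ≤ ENNReal.ofReal K := ih
  -- conclude
  set Bad : ℕ → Set Ω := fun n => {ω | D n ω < -x} with hBad
  have hBadStep : ∀ n ω, D n ω < -x → D (n+1) ω < -x := by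
    intro n ω h
    have h0 : D n ω < 0 := lt_of_lt_of_le h (by linarith)
    have hfr : D (n+1) ω = D n ω :=
      gapSeq_freeze (show gapSeq b (fun k => ξ k ω) n < 0 from h0)
    rw [hfr]
    exact h
  have hBadMono : Monotone Bad :=
    monotone_nat_of_le_succ fun n ω hω => hBadStep n ω hω
  have hsub : {ω | x <
      (∑ j ∈ Finset.range (sInf {j : ℕ | b < ∑ k ∈ Finset.range j, ξ k ω}), ξ j ω) - b}
      ⊆ ⋃ n, Bad n := by
    intro ω hω
    have hω' : x <
        (∑ j ∈ Finset.range (sInf {j : ℕ | b < ∑ k ∈ Finset.range j, ξ k ω}), ξ j ω) - b := hω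
    have hTne : {j : ℕ | b < ∑ k ∈ Finset.range j, ξ k ω}.Nonempty := by
      by_contra hne
      rw [Set.not_nonempty_iff_eq_empty] at hne
      rw [hne, Nat.sInf_empty] at hω'
      simp only [Finset.range_zero, Finset.sum_empty] at hω'
      linarith
    have hmem : sInf {j : ℕ | b < ∑ k ∈ Finset.range j, ξ k ω}
        ∈ {j : ℕ | b < ∑ k ∈ Finset.range j, ξ k ω} := Nat.sInf_mem hTne
    refine Set.mem_iUnion.mpr ⟨sInf {j : ℕ | b < ∑ k ∈ Finset.range j, ξ k ω}, ?_⟩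
    rcases gapSeq_spec b hb (fun k => ξ k ω)
        (sInf {j : ℕ | b < ∑ k ∈ Finset.range j, ξ k ω}) with ⟨hstay, _⟩ | ⟨_, heq, _⟩
    · have h1 := hstay _ le_rfl
      have h2 : b < ∑ k ∈ Finset.range
          (sInf {j : ℕ | b < ∑ k ∈ Finset.range j, ξ k ω}), ξ k ω := hmem
      linarith
    · show gapSeq b (fun k => ξ k ω) (sInf {j : ℕ | b < ∑ k ∈ Finset.range j, ξ k ω}) < -x
      rw [heq]
      linarith
  calc P {ω | x <
      (∑ j ∈ Finset.range (sInf {j : ℕ | b < ∑ k ∈ Finset.range j, ξ k ω}), ξ j ω) - b}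
      ≤ P (⋃ n, Bad n) := measure_mono hsub
    _ = ⨆ n, P (Bad n) := hBadMono.measure_iUnion
    _ ≤ ENNReal.ofReal (K * Real.exp (-(a * x))) := by
        refine iSup_le fun n => ?_
        have h1 : ENNReal.ofReal (Real.exp (a * x)) * P (Bad n)
            ≤ ∫⁻ ω, ENNReal.ofReal (Phi a θ A K (D n ω)) ∂P := by
          have hsub2 : Bad n ⊆ {ω | ENNReal.ofReal (Real.exp (a * x))
              ≤ ENNReal.ofReal (Phi a θ A K (D n ω))} := by
            intro ω hω
            have hω' : D n ω < -x := hω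
            have hneg : D n ω < 0 := lt_of_lt_of_le hω' (by linarith)
            have hphi : Phi a θ A K (D n ω) = Real.exp (-(a * D n ω)) := if_pos hneg
            show ENNReal.ofReal (Real.exp (a * x)) ≤ ENNReal.ofReal (Phi a θ A K (D n ω))
            apply ENNReal.ofReal_le_ofReal
            rw [hphi]
            apply Real.exp_le_exp.mpr
            nlinarith
          calc ENNReal.ofReal (Real.exp (a * x)) * P (Bad n)
              ≤ ENNReal.ofReal (Real.exp (a * x)) * P {ω | ENNReal.ofReal (Real.exp (a * x))
                  ≤ ENNReal.ofReal (Phi a θ A K (D n ω))} :=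
                mul_le_mul_right (measure_mono hsub2) _
            _ ≤ ∫⁻ ω, ENNReal.ofReal (Phi a θ A K (D n ω)) ∂P :=
                mul_meas_ge_le_lintegral₀ ((ENNReal.measurable_ofReal.comp
                  ((Phi_measurable a θ A K).comp (hDmeas n))).aemeasurable) _
        have hne : ENNReal.ofReal (Real.exp (a * x)) ≠ 0 :=
          (ENNReal.ofReal_pos.mpr (Real.exp_pos _)).ne'
        have h3 : P (Bad n) ≤ ENNReal.ofReal K / ENNReal.ofReal (Real.exp (a * x)) := by
          rw [ENNReal.le_div_iff_mul_le (Or.inl hne) (Or.inl ENNReal.ofReal_ne_top)]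
          calc P (Bad n) * ENNReal.ofReal (Real.exp (a * x))
              = ENNReal.ofReal (Real.exp (a * x)) * P (Bad n) := mul_comm _ _
            _ ≤ ENNReal.ofReal K := h1.trans (key n)
        refine h3.trans (le_of_eq ?_)
        have hre : K * Real.exp (-(a * x)) = K / Real.exp (a * x) := by
          rw [Real.exp_neg]
          ring
        rw [hre, ENNReal.ofReal_div_of_pos (Real.exp_pos _)]
end
end

section
/- Assume (1.10) and the Böttcher-case conditions (p₀ = p₁ = 0 and sup_{|u|=1} V(u) ≤ K a.s.), and let Z ≥ 0 be a non-trivial solution of the cascade equation, with h(t) := −log E[e^{-tZ}]. Then for every r > 1: E[e^{-rZ}] ≤ exp(−h(e^{-K}) r^β), where β := sup{a > 0 : P(Σ_{|u|=1} e^{-aV(u)} ≥ 1) = 1}. -/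
open MeasureTheory ProbabilityTheory Filter Set
open scoped ENNReal NNReal Topology Classical

noncomputable section

/-- A branching random walk on `ℝ` in the Ulam–Harris encoding: every potential individual
`u : List ℕ` carries an independent copy of the reproduction point process `Θ`, described by
its (possibly infinite) number of children `ν u` and the displacements `X u · i` of the
children.  All these copies are i.i.d. -/
structure BRW (Ω : Type) [MeasurableSpace Ω] where
  P : Measure Ω
  isProb : IsProbabilityMeasure P
  ν : List ℕ → Ω → ℕ∞
  X : List ℕ → Ω → ℕ → ℝ
  meas_ν : ∀ u, Measurable (ν u)
  meas_X : ∀ u i, Measurable fun ω => X u ω i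
  indep : iIndepFun (fun u ω => (ν u ω, X u ω)) P
  ident : ∀ u, P.map (fun ω => (ν u ω, X u ω)) = P.map fun ω => (ν [] ω, X [] ω)

namespace BRW

variable {Ω : Type} [MeasurableSpace Ω] (b : BRW Ω)

/-- `u` belongs to the random genealogical tree `𝕋`. -/
def mem (ω : Ω) (u : List ℕ) : Prop :=
  ∀ k < u.length, (u.getD k 0 : ℕ∞) < b.ν (u.take k) ω

/-- Position `V(u)` of the individual `u`. -/
def V (ω : Ω) (u : List ℕ) : ℝ :=
  ∑ k ∈ Finset.range u.length, b.X (u.take k) ω (u.getD k 0)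

/-- Minimal position `𝕄_n` at generation `n` (`= ⊤` if the generation is empty). -/
def M (n : ℕ) (ω : Ω) : EReal :=
  ⨅ u ∈ {u : List ℕ | u.length = n ∧ b.mem ω u}, (b.V ω u : EReal)

/-- `Σ_{|u|=1} f(V(u))`, as a sum in `ℝ≥0∞`. -/
def lsum1 (f : ℝ → ℝ≥0∞) (ω : Ω) : ℝ≥0∞ :=
  ∑' i : ℕ, if (i : ℕ∞) < b.ν [] ω then f (b.X [] ω i) else 0

/-- The survival event `S = {𝕋 is infinite}`. -/
def survival : Set Ω := {ω | {u : List ℕ | b.mem ω u}.Infinite}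

/-- The extinction probability `q`. -/
def q : ℝ := (b.P b.survivalᶜ).toReal

/-- `ζ = Σ_{|u|=1} e^{-V(u)}`. -/
def zeta (ω : Ω) : ℝ≥0∞ := b.lsum1 (fun x => ENNReal.ofReal (Real.exp (-x))) ω

/-- `ζ̃ = Σ_{|u|=1} V(u)⁺ e^{-V(u)}`. -/
def zetaTilde (ω : Ω) : ℝ≥0∞ :=
  b.lsum1 (fun x => ENNReal.ofReal (max x 0 * Real.exp (-x))) ω

/-- The boundary case assumptions (1.1):
`E[ν] ∈ (1,∞]`, `E[Σ_{|u|=1} e^{-V(u)}] = 1` and `E[Σ_{|u|=1} V(u) e^{-V(u)}] = 0`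
(the last one expressed through positive and negative parts). -/
def BoundaryCase : Prop :=
  1 < ∫⁻ ω, (b.ν [] ω : ℝ≥0∞) ∂b.P ∧
  ∫⁻ ω, b.zeta ω ∂b.P = 1 ∧
  ∫⁻ ω, b.lsum1 (fun x => ENNReal.ofReal (x * Real.exp (-x))) ω ∂b.P
    = ∫⁻ ω, b.lsum1 (fun x => ENNReal.ofReal (-x * Real.exp (-x))) ω ∂b.P ∧
  ∫⁻ ω, b.lsum1 (fun x => ENNReal.ofReal (x * Real.exp (-x))) ω ∂b.P ≠ ⊤

/-- The integrability condition (1.2). -/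
def IntCond : Prop :=
  ∫⁻ ω, b.lsum1 (fun x => ENNReal.ofReal (x ^ 2 * Real.exp (-x))) ω ∂b.P ≠ ⊤ ∧
  ∫⁻ ω, (b.zeta ω * ENNReal.ofReal (max (Real.log (b.zeta ω).toReal) 0 ^ 2)
      + b.zetaTilde ω * ENNReal.ofReal (max (Real.log (b.zetaTilde ω).toReal) 0)) ∂b.P ≠ ⊤

/-- The stopping line `L_λ = {u ∈ 𝕋 : τ_λ(u) = |u|}`: individuals whose position exceeds `λ`
for the first time along their ancestral line at their own generation. -/
def line (lam : ℝ) (ω : Ω) : Set (List ℕ) :=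
  {u | u ≠ [] ∧ b.mem ω u ∧ (∀ i, 1 ≤ i → i < u.length → b.V ω (u.take i) ≤ lam) ∧
    lam < b.V ω u}

/-- `L_λ^{(a)} = {u ∈ L_λ : V(u) ≤ λ + a}`. -/
def lineA (a lam : ℝ) (ω : Ω) : Set (List ℕ) :=
  {u | u ∈ b.line lam ω ∧ b.V ω u ≤ lam + a}

/-- The law of the reproduction point process `Θ`. -/
def firstGenLaw : Measure (ℕ∞ × (ℕ → ℝ)) := b.P.map fun ω => (b.ν [] ω, b.X [] ω)

/-- `μ` is the law of a nontrivial nonnegative solution `Z` of the smoothing fixed point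
equation `Z =_d Σ_{|u|=1} e^{-V(u)} Z^{(u)}` associated with the point process of `b`. -/
def IsCascadeSolution (μ : Measure ℝ) : Prop :=
  IsProbabilityMeasure μ ∧ μ {x | x < 0} = 0 ∧ μ ({0}ᶜ : Set ℝ) ≠ 0 ∧
  ∃ (Ω' : Type) (_mΩ' : MeasurableSpace Ω') (P' : Measure Ω')
    (ν' : Ω' → ℕ∞) (X' : Ω' → ℕ → ℝ) (Z : ℕ → Ω' → ℝ),
    IsProbabilityMeasure P' ∧
    P'.map (fun ω => (ν' ω, X' ω)) = b.firstGenLaw ∧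
    (∀ i, P'.map (Z i) = μ) ∧
    iIndepFun Z P' ∧
    IndepFun (fun ω => (ν' ω, X' ω)) (fun ω (i : ℕ) => Z i ω) P' ∧
    P'.map (fun ω => ∑' i : ℕ, if (i : ℕ∞) < ν' ω then Real.exp (-(X' ω i)) * Z i ω else 0)
      = μ

end BRW

/-- `q ^ (n-1)` for `n : ℕ∞`, with the convention `q ^ ∞ = 0`. -/
def qpowPred (q : ℝ) (n : ℕ∞) : ℝ := if n = ⊤ then 0 else q ^ (n.toNat - 1)

namespace BRW

variable {Ω : Type} [MeasurableSpace Ω] (b : BRW Ω)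

/-- The Schröder case condition (1.5): `E[1_{(ν ≥ 1)} q^{ν-1} Σ_{|u|=1} e^{γ V(u)}] = 1`,
for a constant `γ > 0`. -/
def Schroeder (γ : ℝ) : Prop :=
  0 < γ ∧
  ∫⁻ ω, (if 1 ≤ b.ν [] ω then ENNReal.ofReal (qpowPred b.q (b.ν [] ω)) else 0)
      * b.lsum1 (fun x => ENNReal.ofReal (Real.exp (γ * x))) ω ∂b.P = 1

/-- Condition (1.6): `E[Σ_{|u|=1} e^{a V(u)}] < ∞` for some `a > γ`. -/
def Cond16 (γ : ℝ) : Prop :=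
  ∃ a > γ, ∫⁻ ω, b.lsum1 (fun x => ENNReal.ofReal (Real.exp (a * x))) ω ∂b.P ≠ ⊤

/-- Condition (1.10): `E[Σ_{|u|=1} e^{-χ V(u)}] ≤ 1` for a constant `χ ∈ (0,1]`, together
with `E[ν] ∈ (1,∞]`. -/
def Cond110 (χ : ℝ) : Prop :=
  0 < χ ∧ χ ≤ 1 ∧
  ∫⁻ ω, b.lsum1 (fun x => ENNReal.ofReal (Real.exp (-(χ * x)))) ω ∂b.P ≤ 1 ∧
  1 < ∫⁻ ω, (b.ν [] ω : ℝ≥0∞) ∂b.P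

/-- The Böttcher case conditions: `p₀ = p₁ = 0` and `sup_{|u|=1} V(u) ≤ K` a.s. -/
def Boettcher (K : ℝ) : Prop :=
  b.P {ω | b.ν [] ω = 0} = 0 ∧ b.P {ω | b.ν [] ω = 1} = 0 ∧
  0 < K ∧ ∀ᵐ ω ∂b.P, ∀ i : ℕ, (i : ℕ∞) < b.ν [] ω → b.X [] ω i ≤ K

/-- The parameter `β := sup{a > 0 : P(Σ_{|u|=1} e^{-a V(u)} ≥ 1) = 1}` of the Böttcher case. -/
def betaParam : ℝ :=
  sSup {a : ℝ | 0 < a ∧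
    b.P {ω | 1 ≤ b.lsum1 (fun x => ENNReal.ofReal (Real.exp (-(a * x)))) ω} = 1}

end BRW

/-- `e^{-a #S}`, with the convention `e^{-∞} = 0`. -/
def expNegMulCard (a : ℝ) (S : Set (List ℕ)) : ℝ :=
  if S.Infinite then 0 else Real.exp (-(a * S.ncard))

/-- `q ^ #S`, with the convention `q ^ ∞ = 0`. -/
def powCard (q : ℝ) (S : Set (List ℕ)) : ℝ :=
  if S.Infinite then 0 else q ^ S.ncard


/-! ### Auxiliary material for the proof of `statement9` -/

set_option maxHeartbeats 1000000

namespace St9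

open MeasureTheory ProbabilityTheory

lemma ofReal_exp_prod (s : Finset ℕ) (f : ℕ → ℝ) :
    ∏ i ∈ s, ENNReal.ofReal (Real.exp (f i)) = ENNReal.ofReal (Real.exp (∑ i ∈ s, f i)) := by
  classical
  induction s using Finset.cons_induction with
  | empty => simp
  | cons a s ha ih =>
      rw [Finset.prod_cons, ih, Finset.sum_cons, Real.exp_add,
        ENNReal.ofReal_mul (Real.exp_nonneg _)]

lemma arith (K a δ : ℝ) (ha : 0 < a) (hδ0 : 0 < δ) (hδK : δ ≤ K)
    (hδ2 : 1 - Real.exp (-(a * K)) ≤ Real.exp (-(a * δ)))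
    (N : ℕ) (hN : 2 ≤ N) (x : ℕ → ℝ) (hx : ∀ i, i < N → x i ≤ K)
    (hsum : 1 ≤ ∑ i ∈ Finset.range N, Real.exp (-(a * x i))) :
    1 ≤ ∑ i ∈ Finset.range N, Real.exp (-(a * max (x i) δ)) := by
  by_cases hall : ∀ i, i < N → δ ≤ x i
  · refine le_trans hsum (Finset.sum_le_sum fun i hi => ?_)
    rw [max_eq_left (hall i (Finset.mem_range.1 hi))]
  · push_neg at hall
    obtain ⟨i₀, hi₀N, hi₀⟩ := hall
    obtain ⟨i₁, hi₁N, hne⟩ : ∃ i₁, i₁ < N ∧ i₁ ≠ i₀ := by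
      rcases eq_or_ne i₀ 0 with h0 | h0
      · exact ⟨1, by omega, by omega⟩
      · exact ⟨0, by omega, by omega⟩
    have hsub : ({i₀, i₁} : Finset ℕ) ⊆ Finset.range N := by
      intro j hj
      simp only [Finset.mem_insert, Finset.mem_singleton] at hj
      rcases hj with rfl | rfl <;> simp [Finset.mem_range, hi₀N, hi₁N]
    have hpair : ∑ i ∈ ({i₀, i₁} : Finset ℕ), Real.exp (-(a * max (x i) δ))
        ≤ ∑ i ∈ Finset.range N, Real.exp (-(a * max (x i) δ)) :=
      Finset.sum_le_sum_of_subset_of_nonneg hsub (fun _ _ _ => (Real.exp_pos _).le)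
    rw [Finset.sum_pair (Ne.symm hne)] at hpair
    refine le_trans ?_ hpair
    have h1 : Real.exp (-(a * max (x i₀) δ)) = Real.exp (-(a * δ)) := by
      rw [max_eq_right hi₀.le]
    have h2 : Real.exp (-(a * K)) ≤ Real.exp (-(a * max (x i₁) δ)) := by
      apply Real.exp_le_exp.2
      have : max (x i₁) δ ≤ K := max_le (hx i₁ hi₁N) hδK
      nlinarith
    rw [h1]
    nlinarith

lemma iIndepFun_congr {Ω' : Type*} [MeasurableSpace Ω'] {β : Type*} [MeasurableSpace β]
    {P : Measure Ω'} {f g : ℕ → Ω' → β} (h : ∀ i, f i =ᵐ[P] g i)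
    (hf : iIndepFun f P) :
    iIndepFun g P := by
  rw [iIndepFun_iff_measure_inter_preimage_eq_mul] at hf ⊢
  intro S sets hsets
  have hae : ∀ i, ∀ s : Set β, (f i ⁻¹' s) =ᵐ[P] (g i ⁻¹' s) := by
    intro i s
    filter_upwards [h i] with ω hω
    show (f i ω ∈ s) = (g i ω ∈ s)
    rw [hω]
  have h1 : ∀ i ∈ S, P (g i ⁻¹' sets i) = P (f i ⁻¹' sets i) := fun i _ =>
    (measure_congr (hae i (sets i))).symm
  have h2 : P (⋂ i ∈ S, g i ⁻¹' sets i) = P (⋂ i ∈ S, f i ⁻¹' sets i) := by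
    refine measure_congr ?_
    have : ∀ᵐ ω ∂P, ∀ i : ℕ, (ω ∈ g i ⁻¹' sets i ↔ ω ∈ f i ⁻¹' sets i) := by
      rw [ae_all_iff]
      intro i
      filter_upwards [h i] with ω hω
      simp only [Set.mem_preimage, hω]
    rw [Filter.eventuallyEq_set]
    filter_upwards [this] with ω hω
    simp only [Set.mem_iInter]
    exact ⟨fun H i hi => (hω i).1 (H i hi), fun H i hi => (hω i).2 (H i hi)⟩
  rw [h2, hf S hsets]
  exact (Finset.prod_congr rfl h1).symm

lemma lintegral_prod_range_of_iIndep {Ω' : Type*} [MeasurableSpace Ω'] {P : Measure Ω'}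
    [IsProbabilityMeasure P]
    (F : ℕ → Ω' → ℝ≥0∞) (hm : ∀ i, Measurable (F i))
    (hind : iIndepFun F P) (m : ℕ) :
    ∫⁻ ω, ∏ i ∈ Finset.range m, F i ω ∂P = ∏ i ∈ Finset.range m, ∫⁻ ω, F i ω ∂P := by
  induction m with
  | zero => simp
  | succ n ih =>
      have hindep := hind.indepFun_prod_range_succ hm n
      have hprodmeas : Measurable (fun ω => ∏ i ∈ Finset.range n, F i ω) :=
        Finset.measurable_prod _ fun i _ => hm i
      have key : ∫⁻ ω, (fun ω => ∏ i ∈ Finset.range n, F i ω) ω * F n ω ∂P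
          = (∫⁻ ω, ∏ i ∈ Finset.range n, F i ω ∂P) * ∫⁻ ω, F n ω ∂P := by
        apply ProbabilityTheory.lintegral_mul_eq_lintegral_mul_lintegral_of_indepFun''
          hprodmeas.aemeasurable (hm n).aemeasurable
        have : (∏ j ∈ Finset.range n, F j) = fun ω => ∏ i ∈ Finset.range n, F i ω := by
          funext ω; exact Finset.prod_apply ω _ _
        rw [← this]
        exact hindep
      simp only [Finset.prod_range_succ]
      rw [← ih]
      exact key

/-- The Laplace transform of `μ`, as a function with values in `ℝ≥0∞`. -/
noncomputable def Lf (μ : Measure ℝ) (c : ℝ) : ℝ≥0∞ :=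
  ∫⁻ z, ENNReal.ofReal (Real.exp (-(c * z))) ∂μ

lemma Lf_le_one (μ : Measure ℝ) [IsProbabilityMeasure μ] (hpos : ∀ᵐ z ∂μ, 0 ≤ z)
    {c : ℝ} (hc : 0 ≤ c) : Lf μ c ≤ 1 := by
  have h1 : ∫⁻ _, (1 : ℝ≥0∞) ∂μ = 1 := by simp
  rw [Lf, ← h1]
  refine lintegral_mono_ae ?_
  filter_upwards [hpos] with z hz
  refine ENNReal.ofReal_le_one.2 (Real.exp_le_one_iff.2 ?_)
  simp only [neg_nonpos]
  positivity

lemma Lf_anti (μ : Measure ℝ) (hpos : ∀ᵐ z ∂μ, 0 ≤ z)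
    {c d : ℝ} (hc : 0 ≤ c) (hcd : c ≤ d) : Lf μ d ≤ Lf μ c := by
  refine lintegral_mono_ae ?_
  filter_upwards [hpos] with z hz
  refine ENNReal.ofReal_le_ofReal (Real.exp_le_exp.2 ?_)
  simp only [neg_le_neg_iff]
  exact mul_le_mul_of_nonneg_right hcd hz

lemma measSet_lt (i : ℕ) : MeasurableSet {p : ℕ∞ × (ℕ → ℝ) | (i : ℕ∞) < p.1} :=
  measurable_fst (Set.to_countable {n : ℕ∞ | (i : ℕ∞) < n}).measurableSet

noncomputable def Gk (t : ℝ) (i : ℕ) (p : ℕ∞ × (ℕ → ℝ)) (z : ℝ) : ℝ≥0∞ :=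
  if (i : ℕ∞) < p.1 then ENNReal.ofReal (Real.exp (-(t * Real.exp (-(p.2 i)) * z))) else 1

lemma measurable_Gk (t : ℝ) (i : ℕ) :
    Measurable (fun q : (ℕ∞ × (ℕ → ℝ)) × ℝ => Gk t i q.1 q.2) := by
  unfold Gk
  have hs : MeasurableSet {q : (ℕ∞ × (ℕ → ℝ)) × ℝ | (i : ℕ∞) < q.1.1} :=
    (measurable_fst.comp measurable_fst) (Set.to_countable {n : ℕ∞ | (i : ℕ∞) < n}).measurableSet
  refine Measurable.ite hs ?_ measurable_const
  have h1 : Measurable fun q : (ℕ∞ × (ℕ → ℝ)) × ℝ => t * Real.exp (-(q.1.2 i)) * q.2 :=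
    ((measurable_const.mul
      (((measurable_pi_apply i).comp (measurable_snd.comp measurable_fst)).neg.exp)).mul
      measurable_snd)
  exact ENNReal.measurable_ofReal.comp h1.neg.exp

lemma Gk_snd_measurable (t : ℝ) (i : ℕ) (p : ℕ∞ × (ℕ → ℝ)) :
    Measurable (fun z => Gk t i p z) :=
  (measurable_Gk t i).comp measurable_prodMk_left

lemma rec_of_cascade
    (T : Measure (ℕ∞ × (ℕ → ℝ))) [IsProbabilityMeasure T]
    (μ : Measure ℝ) [IsProbabilityMeasure μ]
    {Ω' : Type} [MeasurableSpace Ω'] (P' : Measure Ω') [IsProbabilityMeasure P']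
    (W : Ω' → ℕ∞ × (ℕ → ℝ)) (hW : Measurable W) (hWT : P'.map W = T)
    (Z : ℕ → Ω' → ℝ) (hZm : ∀ i, Measurable (Z i)) (hZlaw : ∀ i, P'.map (Z i) = μ)
    (hZind : iIndepFun Z P')
    (hWZ : IndepFun W (fun ω (i : ℕ) => Z i ω) P')
    (hfix : P'.map (fun ω => ∑' i : ℕ,
      if (i : ℕ∞) < (W ω).1 then Real.exp (-((W ω).2 i)) * Z i ω else 0) = μ)
    (hfin : ∀ᵐ ω ∂P', (W ω).1 ≠ ⊤) (hZpos : ∀ᵐ ω ∂P', ∀ i, 0 ≤ Z i ω)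
    (t : ℝ) (ht : 0 ≤ t) (m : ℕ) :
    Lf μ t ≤ ∫⁻ p, ∏ i ∈ Finset.range m,
      (if (i : ℕ∞) < p.1 then Lf μ (t * Real.exp (-(p.2 i))) else 1) ∂T := by
  set SZ : Ω' → ℝ := fun ω => ∑' i : ℕ,
      if (i : ℕ∞) < (W ω).1 then Real.exp (-((W ω).2 i)) * Z i ω else 0 with hSZ
  have hSZae : AEMeasurable SZ P' := by
    by_contra h
    rw [Measure.map_of_not_aemeasurable h] at hfix
    have h1 : (0 : Measure ℝ) Set.univ = μ Set.univ := by rw [hfix]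
    simp at h1
  -- Step 1
  have L1 : Lf μ t = ∫⁻ ω, ENNReal.ofReal (Real.exp (-(t * SZ ω))) ∂P' := by
    rw [Lf, ← hfix, lintegral_map' ?_ hSZae]
    exact (ENNReal.measurable_ofReal.comp
      ((measurable_const.mul measurable_id).neg.exp)).aemeasurable
  -- Step 2 : pointwise a.e. bound
  have L2 : ∀ᵐ ω ∂P', ENNReal.ofReal (Real.exp (-(t * SZ ω)))
      ≤ ∏ i ∈ Finset.range m, Gk t i (W ω) (Z i ω) := by
    filter_upwards [hfin, hZpos] with ω h1 h2
    set f : ℕ → ℝ := fun i =>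
      if (i : ℕ∞) < (W ω).1 then Real.exp (-((W ω).2 i)) * Z i ω else 0 with hf
    have hnn : ∀ i, 0 ≤ f i := by
      intro i
      simp only [hf]
      split_ifs
      · exact mul_nonneg (Real.exp_nonneg _) (h2 i)
      · exact le_rfl
    have hsupp : ∀ i ∉ Finset.range ((W ω).1.toNat), f i = 0 := by
      intro i hi
      simp only [Finset.mem_range, not_lt] at hi
      simp only [hf]
      rw [if_neg]
      rw [← ENat.coe_toNat h1]
      exact fun hlt => absurd (Nat.cast_lt.1 hlt) (not_lt.2 hi)
    have hsummable : Summable f := summable_of_ne_finset_zero hsupp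
    have hpart : ∑ i ∈ Finset.range m, f i ≤ SZ ω :=
      hsummable.sum_le_tsum _ (fun i _ => hnn i)
    calc ENNReal.ofReal (Real.exp (-(t * SZ ω)))
        ≤ ENNReal.ofReal (Real.exp (∑ i ∈ Finset.range m, -(t * f i))) := by
          refine ENNReal.ofReal_le_ofReal (Real.exp_le_exp.2 ?_)
          have he : ∑ i ∈ Finset.range m, -(t * f i)
              = -(t * ∑ i ∈ Finset.range m, f i) := by
            rw [Finset.mul_sum, Finset.sum_neg_distrib]
          rw [he]
          exact neg_le_neg (mul_le_mul_of_nonneg_left hpart ht)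
      _ = ∏ i ∈ Finset.range m, ENNReal.ofReal (Real.exp (-(t * f i))) :=
          (ofReal_exp_prod _ _).symm
      _ = ∏ i ∈ Finset.range m, Gk t i (W ω) (Z i ω) := by
          refine Finset.prod_congr rfl fun i _ => ?_
          simp only [hf, Gk]
          split_ifs with h
          · rw [mul_assoc]
          · norm_num
  -- Step 3 : independence factorization
  set Zv : Ω' → (ℕ → ℝ) := fun ω i => Z i ω with hZv
  have hZvm : Measurable Zv := measurable_pi_lambda _ fun i => hZm i
  set ζ : Measure (ℕ → ℝ) := P'.map Zv with hζ
  haveI : IsProbabilityMeasure ζ := Measure.isProbabilityMeasure_map hZvm.aemeasurable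
  have hjoint : P'.map (fun ω => (W ω, Zv ω)) = T.prod ζ := by
    have h := (indepFun_iff_map_prod_eq_prod_map_map hW.aemeasurable hZvm.aemeasurable).1 hWZ
    rw [← hWT, hζ]
    exact h
  set F : (ℕ∞ × (ℕ → ℝ)) × (ℕ → ℝ) → ℝ≥0∞ :=
    fun q => ∏ i ∈ Finset.range m, Gk t i q.1 (q.2 i) with hF
  have hFm : Measurable F := by
    refine Finset.measurable_prod _ fun i _ => ?_
    exact (measurable_Gk t i).comp
      (measurable_fst.prodMk ((measurable_pi_apply i).comp measurable_snd))
  have L3 : ∫⁻ ω, ∏ i ∈ Finset.range m, Gk t i (W ω) (Z i ω) ∂P'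
      = ∫⁻ p, ∏ i ∈ Finset.range m,
        (if (i : ℕ∞) < p.1 then Lf μ (t * Real.exp (-(p.2 i))) else 1) ∂T := by
    have e1 : ∫⁻ ω, ∏ i ∈ Finset.range m, Gk t i (W ω) (Z i ω) ∂P'
        = ∫⁻ ω, F (W ω, Zv ω) ∂P' := rfl
    have e2 : ∫⁻ ω, F (W ω, Zv ω) ∂P' = ∫⁻ q, F q ∂(T.prod ζ) := by
      rw [← hjoint, lintegral_map' hFm.aemeasurable (hW.prodMk hZvm).aemeasurable]
    have e3 : ∫⁻ q, F q ∂(T.prod ζ) = ∫⁻ p, ∫⁻ y, F (p, y) ∂ζ ∂T :=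
      lintegral_prod F hFm.aemeasurable
    have e4 : ∀ p : ℕ∞ × (ℕ → ℝ), ∫⁻ y, F (p, y) ∂ζ
        = ∏ i ∈ Finset.range m,
          (if (i : ℕ∞) < p.1 then Lf μ (t * Real.exp (-(p.2 i))) else 1) := by
      intro p
      have hmy : Measurable fun y : ℕ → ℝ => ∏ i ∈ Finset.range m, Gk t i p (y i) := by
        refine Finset.measurable_prod _ fun i _ => ?_
        exact (Gk_snd_measurable t i p).comp (measurable_pi_apply i)
      have i1 : ∫⁻ y, F (p, y) ∂ζ = ∫⁻ ω, ∏ i ∈ Finset.range m, Gk t i p (Zv ω i) ∂P' := by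
        rw [hζ, lintegral_map' hmy.aemeasurable hZvm.aemeasurable]
      have i2 : ∫⁻ ω, ∏ i ∈ Finset.range m, Gk t i p (Zv ω i) ∂P'
          = ∏ i ∈ Finset.range m, ∫⁻ ω, Gk t i p (Z i ω) ∂P' := by
        refine lintegral_prod_range_of_iIndep (fun i ω => Gk t i p (Z i ω))
          (fun i => (Gk_snd_measurable t i p).comp (hZm i)) ?_ m
        exact hZind.comp (fun i z => Gk t i p z) fun i => Gk_snd_measurable t i p
      have i3 : ∀ i : ℕ, ∫⁻ ω, Gk t i p (Z i ω) ∂P'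
          = (if (i : ℕ∞) < p.1 then Lf μ (t * Real.exp (-(p.2 i))) else 1) := by
        intro i
        have hh : ∫⁻ ω, Gk t i p (Z i ω) ∂P' = ∫⁻ z, Gk t i p z ∂μ := by
          rw [← hZlaw i, lintegral_map' (Gk_snd_measurable t i p).aemeasurable
            (hZm i).aemeasurable]
        rw [hh]
        by_cases h : (i : ℕ∞) < p.1
        · simp only [Gk, if_pos h, Lf, mul_assoc]
        · simp only [Gk, if_neg h, lintegral_one, measure_univ, mul_one]
      rw [i1, i2]
      exact Finset.prod_congr rfl fun i _ => i3 i
    rw [e1, e2, e3]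
    exact lintegral_congr_ae (Filter.Eventually.of_forall fun p => e4 p)
  calc Lf μ t = ∫⁻ ω, ENNReal.ofReal (Real.exp (-(t * SZ ω))) ∂P' := L1
    _ ≤ ∫⁻ ω, ∏ i ∈ Finset.range m, Gk t i (W ω) (Z i ω) ∂P' := lintegral_mono_ae L2
    _ = _ := L3

noncomputable def Ffun (θ a δ : ℝ) (m : ℕ) (p : ℕ∞ × (ℕ → ℝ)) : ℝ≥0∞ :=
  ENNReal.ofReal (Real.exp (-(θ * ∑ i ∈ Finset.range m,
    (if (i : ℕ∞) < p.1 then Real.exp (-(a * max (p.2 i) δ)) else 0))))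

lemma Ffun_prod (θ a δ : ℝ) (m : ℕ) (p : ℕ∞ × (ℕ → ℝ)) :
    Ffun θ a δ m p = ∏ i ∈ Finset.range m, ENNReal.ofReal (Real.exp
      (-(θ * (if (i : ℕ∞) < p.1 then Real.exp (-(a * max (p.2 i) δ)) else 0)))) := by
  rw [ofReal_exp_prod (Finset.range m)
    (fun i => -(θ * (if (i : ℕ∞) < p.1 then Real.exp (-(a * max (p.2 i) δ)) else 0)))]
  unfold Ffun
  congr 2
  rw [Finset.mul_sum, Finset.sum_neg_distrib]

lemma Ffun_meas (θ a δ : ℝ) (m : ℕ) : Measurable (Ffun θ a δ m) := by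
  unfold Ffun
  refine ENNReal.measurable_ofReal.comp (Measurable.exp (Measurable.neg ?_))
  refine Measurable.const_mul ?_ θ
  refine Finset.measurable_sum _ fun i _ => ?_
  refine Measurable.ite (measSet_lt i) ?_ measurable_const
  exact Measurable.exp (Measurable.neg (Measurable.const_mul
    (Measurable.max ((measurable_pi_apply i).comp measurable_snd :
      Measurable fun p : ℕ∞ × (ℕ → ℝ) => p.2 i) measurable_const) a))

lemma Ffun_anti (θ a δ : ℝ) (hθ : 0 ≤ θ) : Antitone (Ffun θ a δ) := by
  intro m m' hmm' p
  unfold Ffun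
  refine ENNReal.ofReal_le_ofReal (Real.exp_le_exp.2 (neg_le_neg ?_))
  refine mul_le_mul_of_nonneg_left ?_ hθ
  refine Finset.sum_le_sum_of_subset_of_nonneg (Finset.range_subset_range.2 hmm')
    fun i _ _ => ?_
  split_ifs
  · exact (Real.exp_pos _).le
  · exact le_rfl

lemma Ffun_zero (θ a δ : ℝ) (p : ℕ∞ × (ℕ → ℝ)) : Ffun θ a δ 0 p = 1 := by
  unfold Ffun
  simp

lemma Ffun_le (θ a δ : ℝ) (hθ : 0 ≤ θ) (N : ℕ) (p : ℕ∞ × (ℕ → ℝ))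
    (hcond : ∀ i : ℕ, i < N → (i : ℕ∞) < p.1)
    (hge : 1 ≤ ∑ i ∈ Finset.range N, Real.exp (-(a * max (p.2 i) δ))) :
    Ffun θ a δ N p ≤ ENNReal.ofReal (Real.exp (-θ)) := by
  unfold Ffun
  refine ENNReal.ofReal_le_ofReal (Real.exp_le_exp.2 (neg_le_neg ?_))
  have he : ∑ i ∈ Finset.range N,
      (if (i : ℕ∞) < p.1 then Real.exp (-(a * max (p.2 i) δ)) else 0)
      = ∑ i ∈ Finset.range N, Real.exp (-(a * max (p.2 i) δ)) := by
    refine Finset.sum_congr rfl fun i hi => ?_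
    rw [if_pos (hcond i (Finset.mem_range.1 hi))]
  rw [he]
  nlinarith

lemma key (T : Measure (ℕ∞ × (ℕ → ℝ))) [IsProbabilityMeasure T]
    (μ : Measure ℝ) [IsProbabilityMeasure μ] (hpos : ∀ᵐ z ∂μ, 0 ≤ z)
    (K a : ℝ) (hK : 0 < K) (ha : 0 < a)
    (hT2 : ∀ᵐ p ∂T, p.1 ≠ ⊤ ∧ 2 ≤ p.1 ∧ ∀ i : ℕ, (i : ℕ∞) < p.1 → p.2 i ≤ K)
    (hTa : ∀ᵐ p ∂T, (1 : ℝ≥0∞) ≤ ∑' i : ℕ,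
      if (i : ℕ∞) < p.1 then ENNReal.ofReal (Real.exp (-(a * p.2 i))) else 0)
    (hrec : ∀ t : ℝ, 0 ≤ t → ∀ m : ℕ, Lf μ t ≤ ∫⁻ p, ∏ i ∈ Finset.range m,
      (if (i : ℕ∞) < p.1 then Lf μ (t * Real.exp (-(p.2 i))) else 1) ∂T)
    (c : ℝ) (hc : 0 < c) (hLK : Lf μ (Real.exp (-K)) ≤ ENNReal.ofReal (Real.exp (-c))) :
    ∀ r : ℝ, Real.exp (-K) ≤ r → Lf μ r ≤ ENNReal.ofReal (Real.exp (-(c * r ^ a))) := by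
  have hexpK1 : (0:ℝ) < Real.exp (-K) := Real.exp_pos _
  set e : ℝ := Real.exp (-(a * K)) with he
  have he0 : 0 < e := Real.exp_pos _
  have he1 : e < 1 := by
    rw [he, ← Real.exp_zero]
    exact Real.exp_lt_exp.2 (by nlinarith)
  set δ : ℝ := min K ((-Real.log (1 - e)) / a) with hδ
  have hδ0 : 0 < δ := by
    refine lt_min hK (div_pos ?_ ha)
    have := Real.log_neg (by linarith : (0:ℝ) < 1 - e) (by linarith)
    linarith
  have hδK : δ ≤ K := min_le_left _ _
  have hδ2 : 1 - e ≤ Real.exp (-(a * δ)) := by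
    have h1 : δ ≤ (-Real.log (1 - e)) / a := min_le_right _ _
    have h2 : a * δ ≤ -Real.log (1 - e) := by
      rw [mul_comm]
      calc δ * a ≤ ((-Real.log (1 - e)) / a) * a :=
            mul_le_mul_of_nonneg_right h1 ha.le
        _ = -Real.log (1 - e) := by field_simp
    calc 1 - e = Real.exp (Real.log (1 - e)) := (Real.exp_log (by linarith)).symm
      _ ≤ Real.exp (-(a * δ)) := Real.exp_le_exp.2 (by linarith)
  have main : ∀ n : ℕ, ∀ t : ℝ, Real.exp (-K) ≤ t → t ≤ Real.exp (n * δ) →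
      Lf μ t ≤ ENNReal.ofReal (Real.exp (-(c * t ^ a))) := by
    intro n
    induction n with
    | zero =>
        intro t htK ht1
        simp only [Nat.cast_zero, zero_mul, Real.exp_zero] at ht1
        have ht0 : 0 ≤ t := le_trans hexpK1.le htK
        calc Lf μ t ≤ Lf μ (Real.exp (-K)) := Lf_anti μ hpos hexpK1.le htK
          _ ≤ ENNReal.ofReal (Real.exp (-c)) := hLK
          _ ≤ ENNReal.ofReal (Real.exp (-(c * t ^ a))) := by
              refine ENNReal.ofReal_le_ofReal (Real.exp_le_exp.2 (neg_le_neg ?_))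
              have : t ^ a ≤ 1 := Real.rpow_le_one ht0 ht1 ha.le
              nlinarith
    | succ n ih =>
        intro t htK htn1
        by_cases hcase : t ≤ Real.exp (n * δ)
        · exact ih t htK hcase
        push_neg at hcase
        have hexpn1 : (1:ℝ) ≤ Real.exp (n * δ) := Real.one_le_exp (by positivity)
        have ht1 : 1 < t := lt_of_le_of_lt hexpn1 hcase
        have ht0 : 0 < t := by linarith
        have htn1' : t ≤ Real.exp ((n : ℝ) * δ + δ) := by
          refine le_trans htn1 (le_of_eq (congrArg Real.exp ?_))
          push_cast
          ring
        set θ : ℝ := c * t ^ a with hθ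
        have hθ0 : 0 < θ := mul_pos hc (Real.rpow_pos_of_pos ht0 a)
        have step1 : ∀ m : ℕ, Lf μ t ≤ ∫⁻ p, Ffun θ a δ m p ∂T := by
          intro m
          refine le_trans (hrec t ht0.le m) (lintegral_mono_ae ?_)
          filter_upwards [hT2] with p hp
          obtain ⟨hptop, hp2, hpK⟩ := hp
          rw [Ffun_prod]
          refine Finset.prod_le_prod' fun i _ => ?_
          by_cases hi : (i : ℕ∞) < p.1
          · rw [if_pos hi, if_pos hi]
            have hxK : p.2 i ≤ K := hpK i hi
            have huK : max (p.2 i) δ ≤ K := max_le hxK hδK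
            have hud : δ ≤ max (p.2 i) δ := le_max_right _ _
            have hux : p.2 i ≤ max (p.2 i) δ := le_max_left _ _
            have ht'0 : (0:ℝ) < t * Real.exp (-(max (p.2 i) δ)) :=
              mul_pos ht0 (Real.exp_pos _)
            have ht'K : Real.exp (-K) ≤ t * Real.exp (-(max (p.2 i) δ)) := by
              have h1 : Real.exp (-K) ≤ Real.exp (-(max (p.2 i) δ)) :=
                Real.exp_le_exp.2 (by linarith)
              calc Real.exp (-K) = 1 * Real.exp (-K) := (one_mul _).symm
                _ ≤ t * Real.exp (-(max (p.2 i) δ)) :=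
                    mul_le_mul ht1.le h1 (Real.exp_pos _).le ht0.le
            have ht'n : t * Real.exp (-(max (p.2 i) δ)) ≤ Real.exp ((n:ℝ) * δ) := by
              have h1 : Real.exp (-(max (p.2 i) δ)) ≤ Real.exp (-δ) :=
                Real.exp_le_exp.2 (by linarith)
              calc t * Real.exp (-(max (p.2 i) δ))
                  ≤ Real.exp ((n:ℝ) * δ + δ) * Real.exp (-δ) :=
                    mul_le_mul htn1' h1 (Real.exp_pos _).le (Real.exp_pos _).le
                _ = Real.exp ((n:ℝ) * δ) := by
                    rw [← Real.exp_add]; ring_nf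
            have hih := ih (t * Real.exp (-(max (p.2 i) δ))) ht'K ht'n
            have hLle : Lf μ (t * Real.exp (-(p.2 i)))
                ≤ Lf μ (t * Real.exp (-(max (p.2 i) δ))) :=
              Lf_anti μ hpos ht'0.le
                (mul_le_mul_of_nonneg_left (Real.exp_le_exp.2 (by linarith)) ht0.le)
            have hval : c * (t * Real.exp (-(max (p.2 i) δ))) ^ a
                = θ * Real.exp (-(a * max (p.2 i) δ)) := by
              rw [Real.mul_rpow ht0.le (Real.exp_pos _).le, hθ]
              have hh : (Real.exp (-(max (p.2 i) δ))) ^ a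
                  = Real.exp (-(a * max (p.2 i) δ)) := by
                rw [← Real.exp_mul]; ring_nf
              rw [hh]; ring
            calc Lf μ (t * Real.exp (-(p.2 i)))
                ≤ Lf μ (t * Real.exp (-(max (p.2 i) δ))) := hLle
              _ ≤ ENNReal.ofReal (Real.exp
                  (-(c * (t * Real.exp (-(max (p.2 i) δ))) ^ a))) := hih
              _ = ENNReal.ofReal (Real.exp
                  (-(θ * Real.exp (-(a * max (p.2 i) δ))))) := by rw [hval]
          · rw [if_neg hi, if_neg hi]
            simp
        have hF0 : ∫⁻ p, Ffun θ a δ 0 p ∂T ≠ ⊤ := by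
          rw [lintegral_congr fun p => Ffun_zero θ a δ p]
          simp
        have step2 : Lf μ t ≤ ∫⁻ p, ⨅ m, Ffun θ a δ m p ∂T := by
          rw [lintegral_iInf (fun m => Ffun_meas θ a δ m)
            (Ffun_anti θ a δ hθ0.le) hF0]
          exact le_iInf step1
        have step3 : ∀ᵐ p ∂T, (⨅ m, Ffun θ a δ m p)
            ≤ ENNReal.ofReal (Real.exp (-θ)) := by
          filter_upwards [hT2, hTa] with p hp hpa
          obtain ⟨hptop, hp2, hpK⟩ := hp
          have hcoe : ((p.1.toNat : ℕ) : ℕ∞) = p.1 := ENat.coe_toNat hptop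
          have hcond : ∀ i : ℕ, ((i : ℕ∞) < p.1 ↔ i < p.1.toNat) := by
            intro i
            conv_lhs => rw [← hcoe]
            exact Nat.cast_lt
          have hN2 : 2 ≤ p.1.toNat := by
            have h22 : ((2:ℕ) : ℕ∞) ≤ ((p.1.toNat : ℕ) : ℕ∞) := by
              rw [hcoe]; exact_mod_cast hp2
            exact_mod_cast h22
          have hreal : 1 ≤ ∑ i ∈ Finset.range p.1.toNat,
              Real.exp (-(a * p.2 i)) := by
            have h1 : (∑' i : ℕ, if (i : ℕ∞) < p.1
                then ENNReal.ofReal (Real.exp (-(a * p.2 i))) else 0)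
                = ∑ i ∈ Finset.range p.1.toNat,
                  ENNReal.ofReal (Real.exp (-(a * p.2 i))) := by
              rw [tsum_eq_sum (s := Finset.range p.1.toNat) ?_]
              · refine Finset.sum_congr rfl fun i hi => ?_
                rw [if_pos ((hcond i).2 (Finset.mem_range.1 hi))]
              · intro i hi
                rw [if_neg]
                rw [hcond i]
                simpa using hi
            rw [h1, ← ENNReal.ofReal_sum_of_nonneg
              (fun i _ => (Real.exp_pos _).le)] at hpa
            exact ENNReal.one_le_ofReal.1 hpa
          have harith : 1 ≤ ∑ i ∈ Finset.range p.1.toNat,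
              Real.exp (-(a * max (p.2 i) δ)) :=
            arith K a δ ha hδ0 hδK hδ2 p.1.toNat hN2 (fun i => p.2 i)
              (fun i hi => hpK i ((hcond i).2 hi)) hreal
          exact le_trans (iInf_le _ p.1.toNat)
            (Ffun_le θ a δ hθ0.le p.1.toNat p (fun i hi => (hcond i).2 hi) harith)
        calc Lf μ t ≤ ∫⁻ p, ⨅ m, Ffun θ a δ m p ∂T := step2
          _ ≤ ∫⁻ _, ENNReal.ofReal (Real.exp (-θ)) ∂T := lintegral_mono_ae step3
          _ = ENNReal.ofReal (Real.exp (-θ)) := by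
              rw [lintegral_const, measure_univ, mul_one]
  intro r hrK
  have hr0 : 0 < r := lt_of_lt_of_le hexpK1 hrK
  obtain ⟨n, hn⟩ := exists_nat_ge (Real.log r / δ)
  have hrn : r ≤ Real.exp (n * δ) := by
    have h1 : Real.log r ≤ n * δ := by
      rw [div_le_iff₀ hδ0] at hn
      linarith
    calc r = Real.exp (Real.log r) := (Real.exp_log hr0).symm
      _ ≤ Real.exp (n * δ) := Real.exp_le_exp.2 h1
  exact main n r hrK hrn

lemma integral_eq_toReal_Lf (μ : Measure ℝ) (t : ℝ) :
    ∫ x, Real.exp (-(t * x)) ∂μ = (Lf μ t).toReal := by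
  have hc : Continuous fun x : ℝ => Real.exp (-(t * x)) := by continuity
  rw [Lf, integral_eq_lintegral_of_nonneg_ae
    (Filter.Eventually.of_forall fun x => (Real.exp_pos _).le) hc.aestronglyMeasurable]

lemma Lf_meas_integrand (t : ℝ) :
    Measurable fun z : ℝ => ENNReal.ofReal (Real.exp (-(t * z))) := by
  have hc : Continuous fun z : ℝ => Real.exp (-(t * z)) := by continuity
  exact ENNReal.measurable_ofReal.comp hc.measurable

lemma Lf_pos (μ : Measure ℝ) [IsProbabilityMeasure μ] (t : ℝ) : Lf μ t ≠ 0 := by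
  rw [Lf]
  intro h
  rw [lintegral_eq_zero_iff (Lf_meas_integrand t)] at h
  have h2 : ∀ᵐ z ∂μ, False := by
    filter_upwards [h] with z hz
    have h3 : (0:ℝ≥0∞) < ENNReal.ofReal (Real.exp (-(t * z))) :=
      ENNReal.ofReal_pos.2 (Real.exp_pos _)
    rw [hz] at h3
    exact lt_irrefl _ h3
  have h4 : μ Set.univ = 0 := by simpa [ae_iff] using h2
  simp [measure_univ] at h4

lemma Lf_lt_one (μ : Measure ℝ) [IsProbabilityMeasure μ] (hpos : ∀ᵐ z ∂μ, 0 ≤ z)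
    (hnontriv : μ ({0}ᶜ : Set ℝ) ≠ 0) (hneg : μ {x : ℝ | x < 0} = 0)
    {t : ℝ} (ht : 0 < t) : Lf μ t < 1 := by
  set D : ℝ≥0∞ := ∫⁻ z, ENNReal.ofReal (1 - Real.exp (-(t * z))) ∂μ with hD
  have hmeasD : Measurable fun z : ℝ => ENNReal.ofReal (1 - Real.exp (-(t * z))) := by
    have hc : Continuous fun z : ℝ => 1 - Real.exp (-(t * z)) := by continuity
    exact ENNReal.measurable_ofReal.comp hc.measurable
  have hDpos : 0 < D := by
    rw [hD, lintegral_pos_iff_support hmeasD]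
    have hsub : {x : ℝ | 0 < x} ⊆ Function.support
        fun z => ENNReal.ofReal (1 - Real.exp (-(t * z))) := by
      intro x hx
      have h1 : Real.exp (-(t * x)) < 1 := by
        rw [← Real.exp_zero]
        exact Real.exp_lt_exp.2 (by nlinarith [Set.mem_setOf_eq ▸ hx])
      have h2 : (0:ℝ≥0∞) < ENNReal.ofReal (1 - Real.exp (-(t * x))) :=
        ENNReal.ofReal_pos.2 (by linarith)
      exact h2.ne'
    refine lt_of_lt_of_le ?_ (measure_mono hsub)
    have hcover : ({0}ᶜ : Set ℝ) ⊆ {x : ℝ | 0 < x} ∪ {x : ℝ | x < 0} := by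
      intro x hx
      rcases lt_trichotomy x 0 with h | h | h
      · exact Or.inr h
      · exact absurd h hx
      · exact Or.inl h
    have h1 : μ ({0}ᶜ : Set ℝ) ≤ μ {x : ℝ | 0 < x} + μ {x : ℝ | x < 0} :=
      le_trans (measure_mono hcover) (measure_union_le _ _)
    rw [hneg, add_zero] at h1
    exact lt_of_lt_of_le (pos_iff_ne_zero.2 hnontriv) h1
  have hsum : Lf μ t + D = 1 := by
    rw [Lf, hD, ← lintegral_add_left (Lf_meas_integrand t)]
    have h5 : ∫⁻ z, (ENNReal.ofReal (Real.exp (-(t * z)))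
        + ENNReal.ofReal (1 - Real.exp (-(t * z)))) ∂μ = ∫⁻ _, (1:ℝ≥0∞) ∂μ := by
      refine lintegral_congr_ae ?_
      filter_upwards [hpos] with z hz
      have h1 : Real.exp (-(t * z)) ≤ 1 := by
        rw [← Real.exp_zero]
        exact Real.exp_le_exp.2 (by nlinarith)
      rw [← ENNReal.ofReal_add (Real.exp_pos _).le (by linarith)]
      norm_num
    rw [h5]
    simp
  have hfin : Lf μ t ≠ ⊤ := by
    intro h
    rw [h] at hsum
    simp at hsum
  calc Lf μ t < Lf μ t + D := ENNReal.lt_add_right hfin hDpos.ne'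
    _ = 1 := hsum

/-- The first-generation sum `Σ_{i<ν} e^{-a X_i}` as a function on the canonical space. -/
noncomputable def gsum (a : ℝ) (p : ℕ∞ × (ℕ → ℝ)) : ℝ≥0∞ :=
  ∑' i : ℕ, if (i : ℕ∞) < p.1 then ENNReal.ofReal (Real.exp (-(a * p.2 i))) else 0

lemma gsum_meas (a : ℝ) : Measurable (gsum a) := by
  unfold gsum
  refine Measurable.ennreal_tsum fun i => ?_
  refine Measurable.ite (measSet_lt i) ?_ measurable_const
  have hc : Continuous fun x : ℝ => ENNReal.ofReal (Real.exp (-(a * x))) := by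
    exact ENNReal.continuous_ofReal.comp (by continuity)
  exact hc.measurable.comp ((measurable_pi_apply i).comp measurable_snd)

lemma measSet_K (K : ℝ) :
    MeasurableSet {p : ℕ∞ × (ℕ → ℝ) | ∀ i : ℕ, (i : ℕ∞) < p.1 → p.2 i ≤ K} := by
  have h : {p : ℕ∞ × (ℕ → ℝ) | ∀ i : ℕ, (i : ℕ∞) < p.1 → p.2 i ≤ K}
      = ⋂ i : ℕ, ({p : ℕ∞ × (ℕ → ℝ) | (i : ℕ∞) < p.1}ᶜ
        ∪ {p : ℕ∞ × (ℕ → ℝ) | p.2 i ≤ K}) := by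
    ext p
    simp only [Set.mem_setOf_eq, Set.mem_iInter, Set.mem_union, Set.mem_compl_iff]
    exact ⟨fun h i => (imp_iff_not_or.1 (h i)), fun h i => (imp_iff_not_or.2 (h i))⟩
  rw [h]
  refine MeasurableSet.iInter fun i => MeasurableSet.union (measSet_lt i).compl ?_
  exact ((measurable_pi_apply i).comp measurable_snd) measurableSet_Iic

lemma two_le_of_ne (n : ℕ∞) (h0 : n ≠ 0) (h1 : n ≠ 1) : 2 ≤ n := by
  induction n using ENat.recTopCoe with
  | top => exact le_top
  | coe k =>
      have hk0 : k ≠ 0 := by simpa using h0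
      have hk1 : k ≠ 1 := by simpa using h1
      exact_mod_cast (by omega : 2 ≤ k)

end St9

/-- **(3.17).**  Assume (1.10) and the Böttcher case conditions, and let `Z ≥ 0` be a
non-trivial solution of the cascade equation with Laplace exponent
`h(t) = −log E[e^{-tZ}]`.  Then for every `r > 1`:
`E[e^{-rZ}] ≤ exp(−h(e^{-K}) r^β)`. -/
theorem statement9 {Ω : Type} [MeasurableSpace Ω] (b : BRW Ω) (χ K : ℝ)
    (h110 : b.Cond110 χ) (hBo : b.Boettcher K)
    (μ : Measure ℝ) (hZ : b.IsCascadeSolution μ) :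
    ∀ r : ℝ, 1 < r →
      ∫ x, Real.exp (-(r * x)) ∂μ ≤
        Real.exp (-((-Real.log (∫ x, Real.exp (-(Real.exp (-K) * x)) ∂μ)) *
          r ^ b.betaParam)) := by
  classical
  intro r hr
  obtain ⟨hχ0, hχ1, hχint, hνgt1⟩ := h110
  obtain ⟨hp0, hp1, hK0, hXK⟩ := hBo
  obtain ⟨hμprob, hμneg, hμnontriv, Ω', mΩ', P', ν', X', Z,
    hP'prob, hmap_pair, hZilaw, hZiind, hWZind, hfix⟩ := hZ
  haveI := b.isProb
  haveI := hμprob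
  letI := mΩ'
  haveI := hP'prob
  -- the reproduction law on the canonical space
  set T : Measure (ℕ∞ × (ℕ → ℝ)) := b.firstGenLaw with hTdef
  have hbpm : Measurable (fun ω => (b.ν [] ω, b.X [] ω)) :=
    (b.meas_ν []).prodMk (measurable_pi_lambda _ (b.meas_X []))
  have hTmap : T = b.P.map (fun ω => (b.ν [] ω, b.X [] ω)) := rfl
  haveI : IsProbabilityMeasure T := by
    rw [hTmap]; exact Measure.isProbabilityMeasure_map hbpm.aemeasurable
  -- μ-side quantities
  have hpos : ∀ᵐ z ∂μ, 0 ≤ z := by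
    rw [ae_iff]
    have h : {z : ℝ | ¬ 0 ≤ z} = {x : ℝ | x < 0} := by ext z; simp [not_le]
    rw [h]; exact hμneg
  have hk0 : (0:ℝ) < Real.exp (-K) := Real.exp_pos _
  have hk1 : Real.exp (-K) < 1 := by
    rw [← Real.exp_zero]; exact Real.exp_lt_exp.2 (by linarith)
  have hkr : Real.exp (-K) ≤ r := by linarith
  have hr0 : (0:ℝ) < r := by linarith
  have hφKL : ∫ x, Real.exp (-(Real.exp (-K) * x)) ∂μ = (St9.Lf μ (Real.exp (-K))).toReal :=
    St9.integral_eq_toReal_Lf μ _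
  have hLfk_le1 : St9.Lf μ (Real.exp (-K)) ≤ 1 := St9.Lf_le_one μ hpos hk0.le
  have hLfk_ne_top : St9.Lf μ (Real.exp (-K)) ≠ ⊤ :=
    (lt_of_le_of_lt hLfk_le1 ENNReal.one_lt_top).ne
  set φK : ℝ := ∫ x, Real.exp (-(Real.exp (-K) * x)) ∂μ with hφKdef
  have hφK0 : 0 < φK := by
    rw [hφKL]
    exact ENNReal.toReal_pos (St9.Lf_pos μ _) hLfk_ne_top
  have hφK1 : φK < 1 := by
    rw [hφKL]
    have h := St9.Lf_lt_one μ hpos hμnontriv hμneg hk0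
    have h2 := (ENNReal.toReal_lt_toReal hLfk_ne_top ENNReal.one_ne_top).2 h
    simpa using h2
  set c : ℝ := -Real.log φK with hc
  have hc0 : 0 < c := by
    rw [hc]
    have := Real.log_neg hφK0 hφK1
    linarith
  have hexpc : Real.exp (-c) = φK := by rw [hc, neg_neg, Real.exp_log hφK0]
  have hLK : St9.Lf μ (Real.exp (-K)) ≤ ENNReal.ofReal (Real.exp (-c)) := by
    rw [hexpc, hφKL, ENNReal.ofReal_toReal hLfk_ne_top]
  -- T-side a.e. facts
  have hms0 : MeasurableSet {p : ℕ∞ × (ℕ → ℝ) | p.1 = 0} :=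
    measurable_fst (Set.to_countable {n : ℕ∞ | n = 0}).measurableSet
  have hms1 : MeasurableSet {p : ℕ∞ × (ℕ → ℝ) | p.1 = 1} :=
    measurable_fst (Set.to_countable {n : ℕ∞ | n = 1}).measurableSet
  have hT0 : T {p : ℕ∞ × (ℕ → ℝ) | p.1 = 0} = 0 := by
    rw [hTmap, Measure.map_apply hbpm hms0]
    exact hp0
  have hT1 : T {p : ℕ∞ × (ℕ → ℝ) | p.1 = 1} = 0 := by
    rw [hTmap, Measure.map_apply hbpm hms1]
    exact hp1
  have hTK : ∀ᵐ p ∂T, ∀ i : ℕ, (i : ℕ∞) < p.1 → p.2 i ≤ K := by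
    rw [hTmap, ae_map_iff hbpm.aemeasurable (St9.measSet_K K)]
    exact hXK
  have hsum_fin : ∀ᵐ p ∂T, St9.gsum χ p ≠ ⊤ := by
    have hint : ∫⁻ p, St9.gsum χ p ∂T ≤ 1 := by
      rw [hTmap, lintegral_map (St9.gsum_meas χ) hbpm]
      exact hχint
    exact (ae_lt_top (St9.gsum_meas χ)
      (lt_of_le_of_lt hint ENNReal.one_lt_top).ne).mono fun p h => h.ne
  have hTtop : ∀ᵐ p ∂T, p.1 ≠ ⊤ := by
    filter_upwards [hsum_fin, hTK] with p h1 h2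
    intro htop
    apply h1
    have hall : ∀ i : ℕ, (i : ℕ∞) < p.1 := by
      intro i
      rw [htop]
      exact lt_top_iff_ne_top.2 (ENat.coe_ne_top i)
    have hterm : ∀ i : ℕ, ENNReal.ofReal (Real.exp (-(χ * K)))
        ≤ (if (i : ℕ∞) < p.1 then ENNReal.ofReal (Real.exp (-(χ * p.2 i))) else 0) := by
      intro i
      rw [if_pos (hall i)]
      refine ENNReal.ofReal_le_ofReal (Real.exp_le_exp.2 ?_)
      have := h2 i (hall i)
      nlinarith
    have hge : (∑' _ : ℕ, ENNReal.ofReal (Real.exp (-(χ * K)))) ≤ St9.gsum χ p :=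
      ENNReal.summable.tsum_le_tsum hterm ENNReal.summable
    rw [ENNReal.tsum_const_eq_top_of_ne_zero
      (ENNReal.ofReal_pos.2 (Real.exp_pos _)).ne'] at hge
    exact top_le_iff.1 hge
  have hT2' : ∀ᵐ p ∂T, (2:ℕ∞) ≤ p.1 := by
    have h0 : ∀ᵐ p ∂T, ¬ (p.1 = 0) := by
      rw [ae_iff]
      have h : {p : ℕ∞ × (ℕ → ℝ) | ¬ ¬ p.1 = 0} = {p : ℕ∞ × (ℕ → ℝ) | p.1 = 0} := by
        ext p; simp
      rw [h]; exact hT0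
    have h1 : ∀ᵐ p ∂T, ¬ (p.1 = 1) := by
      rw [ae_iff]
      have h : {p : ℕ∞ × (ℕ → ℝ) | ¬ ¬ p.1 = 1} = {p : ℕ∞ × (ℕ → ℝ) | p.1 = 1} := by
        ext p; simp
      rw [h]; exact hT1
    filter_upwards [h0, h1] with p hh0 hh1 using St9.two_le_of_ne p.1 hh0 hh1
  have hTA : ∀ᵐ p ∂T, p.1 ≠ ⊤ ∧ 2 ≤ p.1 ∧ ∀ i : ℕ, (i : ℕ∞) < p.1 → p.2 i ≤ K := by
    filter_upwards [hTtop, hT2', hTK] with p h1 h2 h3 using ⟨h1, h2, h3⟩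
  -- transfer of the `betaParam`-defining events
  have hTa : ∀ a : ℝ,
      b.P {ω | 1 ≤ b.lsum1 (fun x => ENNReal.ofReal (Real.exp (-(a * x)))) ω} = 1 →
      ∀ᵐ p ∂T, (1 : ℝ≥0∞) ≤ ∑' i : ℕ,
        if (i : ℕ∞) < p.1 then ENNReal.ofReal (Real.exp (-(a * p.2 i))) else 0 := by
    intro a hPa
    have hmeasA : MeasurableSet {p : ℕ∞ × (ℕ → ℝ) | 1 ≤ St9.gsum a p} :=
      measurableSet_le measurable_const (St9.gsum_meas a)
    have hTA1 : T {p : ℕ∞ × (ℕ → ℝ) | 1 ≤ St9.gsum a p} = 1 := by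
      rw [hTmap, Measure.map_apply hbpm hmeasA]
      exact hPa
    have hcompl : T {p : ℕ∞ × (ℕ → ℝ) | 1 ≤ St9.gsum a p}ᶜ = 0 := by
      have h := measure_compl hmeasA (measure_ne_top T _)
      rw [hTA1, measure_univ] at h
      simpa using h
    rw [ae_iff]
    exact hcompl
  -- the recursive inequality, via the cascade fixed point
  have hrec : ∀ t : ℝ, 0 ≤ t → ∀ m : ℕ, St9.Lf μ t ≤ ∫⁻ p, ∏ i ∈ Finset.range m,
      (if (i : ℕ∞) < p.1 then St9.Lf μ (t * Real.exp (-(p.2 i))) else 1) ∂T := by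
    have hpairae : AEMeasurable (fun ω => (ν' ω, X' ω)) P' := by
      by_contra h
      rw [Measure.map_of_not_aemeasurable h] at hmap_pair
      have h0 := measure_univ (μ := T)
      rw [← hmap_pair] at h0
      simp at h0
    have hZae : ∀ i, AEMeasurable (Z i) P' := by
      intro i
      by_contra h
      have hl := hZilaw i
      rw [Measure.map_of_not_aemeasurable h] at hl
      have h0 := measure_univ (μ := μ)
      rw [← hl] at h0
      simp at h0
    set W : Ω' → ℕ∞ × (ℕ → ℝ) := hpairae.mk _ with hWdef
    have hWm : Measurable W := hpairae.measurable_mk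
    have hWeq : (fun ω => (ν' ω, X' ω)) =ᵐ[P'] W := hpairae.ae_eq_mk
    set Z' : ℕ → Ω' → ℝ := fun i => (hZae i).mk _ with hZ'def
    have hZ'm : ∀ i, Measurable (Z' i) := fun i => (hZae i).measurable_mk
    have hZ'eq : ∀ i, Z i =ᵐ[P'] Z' i := fun i => (hZae i).ae_eq_mk
    have hWT : P'.map W = T := by
      rw [← Measure.map_congr hWeq]
      exact hmap_pair
    have hZ'law : ∀ i, P'.map (Z' i) = μ := fun i => by
      rw [← Measure.map_congr (hZ'eq i)]
      exact hZilaw i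
    have hZ'ind : iIndepFun Z' P' :=
      St9.iIndepFun_congr hZ'eq hZiind
    have hvec : (fun ω (i : ℕ) => Z i ω) =ᵐ[P'] (fun ω i => Z' i ω) := by
      have h := ae_all_iff.2 hZ'eq
      filter_upwards [h] with ω hω
      funext i
      exact hω i
    have hWZ' : IndepFun W (fun ω (i : ℕ) => Z' i ω) P' := hWZind.congr hWeq hvec
    have hfix' : P'.map (fun ω => ∑' i : ℕ,
        if (i : ℕ∞) < (W ω).1 then Real.exp (-((W ω).2 i)) * Z' i ω else 0) = μ := by
      rw [← hfix]
      symm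
      refine Measure.map_congr ?_
      filter_upwards [hWeq, ae_all_iff.2 hZ'eq] with ω h1 h2
      rw [← h1]
      exact tsum_congr fun i => by rw [h2 i]
    have hfin' : ∀ᵐ ω ∂P', (W ω).1 ≠ ⊤ := by
      have ht := hTtop
      rw [← hWT] at ht
      exact (ae_map_iff hWm.aemeasurable
        ((measurable_fst (Set.to_countable {n : ℕ∞ | n = ⊤}).measurableSet).compl)).1 ht
    have hZpos' : ∀ᵐ ω ∂P', ∀ i, 0 ≤ Z' i ω := by
      rw [ae_all_iff]
      intro i
      have h0 : P' {ω | Z' i ω < 0} = 0 := by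
        have h := Measure.map_apply (μ := P') (hZ'm i)
          (measurableSet_Iio : MeasurableSet (Set.Iio (0:ℝ)))
        rw [hZ'law i] at h
        have h2 : μ (Set.Iio (0:ℝ)) = 0 := hμneg
        rw [h2] at h
        exact h.symm
      rw [ae_iff]
      have h : {ω | ¬ 0 ≤ Z' i ω} = {ω | Z' i ω < 0} := by ext ω; simp [not_le]
      rw [h]
      exact h0
    exact fun t ht m => St9.rec_of_cascade T μ P' W hWm hWT Z' hZ'm hZ'law hZ'ind
      hWZ' hfix' hfin' hZpos' t ht m
  -- the set defining βₚ
  set SS : Set ℝ := {a : ℝ | 0 < a ∧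
    b.P {ω | 1 ≤ b.lsum1 (fun x => ENNReal.ofReal (Real.exp (-(a * x)))) ω} = 1} with hSS
  have hβ : b.betaParam = sSup SS := rfl
  -- membership of log 2 / K
  have ha₀pos : 0 < Real.log 2 / K := div_pos (Real.log_pos one_lt_two) hK0
  have ha₀K : Real.log 2 / K * K = Real.log 2 := div_mul_cancel₀ _ hK0.ne'
  have hgebound : ∀ᵐ p ∂T, (1:ℝ≥0∞) ≤ St9.gsum (Real.log 2 / K) p := by
    filter_upwards [hTA] with p hp
    obtain ⟨hptop, hp2, hpK⟩ := hp
    have h01 : ∀ i : ℕ, i < 2 → (i : ℕ∞) < p.1 := by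
      intro i hi
      refine lt_of_lt_of_le ?_ hp2
      exact_mod_cast hi
    have hterm : ∀ i : ℕ, i < 2 →
        ENNReal.ofReal (Real.exp (-(Real.log 2 / K * K)))
        ≤ (if (i : ℕ∞) < p.1
          then ENNReal.ofReal (Real.exp (-(Real.log 2 / K * p.2 i))) else 0) := by
      intro i hi
      rw [if_pos (h01 i hi)]
      refine ENNReal.ofReal_le_ofReal (Real.exp_le_exp.2 ?_)
      have h1 := hpK i (h01 i hi)
      nlinarith
    have hsum2 : ∑ i ∈ Finset.range 2, (if (i : ℕ∞) < p.1
          then ENNReal.ofReal (Real.exp (-(Real.log 2 / K * p.2 i))) else 0)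
        ≤ St9.gsum (Real.log 2 / K) p := ENNReal.sum_le_tsum _
    have h2e : ENNReal.ofReal (Real.exp (-(Real.log 2 / K * K)))
        + ENNReal.ofReal (Real.exp (-(Real.log 2 / K * K)))
        ≤ ∑ i ∈ Finset.range 2, (if (i : ℕ∞) < p.1
          then ENNReal.ofReal (Real.exp (-(Real.log 2 / K * p.2 i))) else 0) := by
      rw [Finset.sum_range_succ, Finset.sum_range_one]
      exact add_le_add (hterm 0 (by norm_num)) (hterm 1 (by norm_num))
    have hval : ENNReal.ofReal (Real.exp (-(Real.log 2 / K * K)))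
        + ENNReal.ofReal (Real.exp (-(Real.log 2 / K * K))) = 1 := by
      rw [← ENNReal.ofReal_add (Real.exp_nonneg _) (Real.exp_nonneg _)]
      have hv : Real.exp (-(Real.log 2 / K * K)) + Real.exp (-(Real.log 2 / K * K))
          = 1 := by
        rw [ha₀K, Real.exp_neg, Real.exp_log two_pos]
        norm_num
      rw [hv, ENNReal.ofReal_one]
    calc (1:ℝ≥0∞) = _ := hval.symm
      _ ≤ _ := h2e
      _ ≤ _ := hsum2
  have ha₀mem : Real.log 2 / K ∈ SS := by
    refine ⟨ha₀pos, ?_⟩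
    have hmeasA : MeasurableSet {p : ℕ∞ × (ℕ → ℝ) | 1 ≤ St9.gsum (Real.log 2 / K) p} :=
      measurableSet_le measurable_const (St9.gsum_meas _)
    have hAc : T {p : ℕ∞ × (ℕ → ℝ) | 1 ≤ St9.gsum (Real.log 2 / K) p}ᶜ = 0 := by
      have h := hgebound
      rw [ae_iff] at h
      have he : {p : ℕ∞ × (ℕ → ℝ) | ¬ 1 ≤ St9.gsum (Real.log 2 / K) p}
          = {p : ℕ∞ × (ℕ → ℝ) | 1 ≤ St9.gsum (Real.log 2 / K) p}ᶜ := rfl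
      rw [he] at h
      exact h
    have hA1 : T {p : ℕ∞ × (ℕ → ℝ) | 1 ≤ St9.gsum (Real.log 2 / K) p} = 1 := by
      have h := measure_compl hmeasA (measure_ne_top T _)
      rw [hAc, measure_univ] at h
      refine le_antisymm prob_le_one ?_
      exact tsub_eq_zero_iff_le.1 h.symm
    rw [hTmap, Measure.map_apply hbpm hmeasA] at hA1
    exact hA1
  -- the single-exponent bound
  have hLHS : ∫ x, Real.exp (-(r * x)) ∂μ = (St9.Lf μ r).toReal :=
    St9.integral_eq_toReal_Lf μ r
  have hbound : ∀ a ∈ SS, (St9.Lf μ r).toReal ≤ Real.exp (-(c * r ^ a)) := by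
    intro a ha
    refine ENNReal.toReal_le_of_le_ofReal (Real.exp_nonneg _) ?_
    exact St9.key T μ hpos K a hK0 ha.1 hTA (hTa a ha.2) hrec c hc0 hLK r hkr
  rw [hLHS]
  show (St9.Lf μ r).toReal ≤ Real.exp (-(c * r ^ b.betaParam))
  by_cases hbdd : BddAbove SS
  · -- bounded case : approximate the supremum
    have hne : SS.Nonempty := ⟨Real.log 2 / K, ha₀mem⟩
    have hβpos : 0 < sSup SS := lt_of_lt_of_le ha₀pos (le_csSup hbdd ha₀mem)
    have hseq : ∀ n : ℕ, (St9.Lf μ r).toReal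
        ≤ Real.exp (-(c * r ^ (sSup SS - 1 / (n + 1)))) := by
      intro n
      have hlt : sSup SS - 1 / (n + 1) < sSup SS := by
        have : (0:ℝ) < 1 / (n + 1) := by positivity
        linarith
      obtain ⟨a, haSS, hagt⟩ := exists_lt_of_lt_csSup hne hlt
      refine le_trans (hbound a haSS) ?_
      refine Real.exp_le_exp.2 (neg_le_neg ?_)
      refine mul_le_mul_of_nonneg_left ?_ hc0.le
      exact Real.rpow_le_rpow_left_iff hr |>.2 hagt.le
    have hcont : Continuous fun y : ℝ => Real.exp (-(c * r ^ y)) := by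
      have hrw : (fun y : ℝ => Real.exp (-(c * r ^ y)))
          = fun y : ℝ => Real.exp (-(c * Real.exp (Real.log r * y))) := by
        funext y
        rw [Real.rpow_def_of_pos hr0]
      rw [hrw]
      continuity
    have htend : Filter.Tendsto (fun n : ℕ => Real.exp (-(c * r ^ (sSup SS - 1 / (n + 1)))))
        Filter.atTop (𝓝 (Real.exp (-(c * r ^ sSup SS)))) := by
      have h1 : Filter.Tendsto (fun n : ℕ => sSup SS - 1 / ((n:ℝ) + 1))
          Filter.atTop (𝓝 (sSup SS)) := by
        have h2 := tendsto_one_div_add_atTop_nhds_zero_nat (𝕜 := ℝ)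
        have h3 := Filter.Tendsto.const_sub (sSup SS) h2
        simpa using h3
      exact (hcont.tendsto (sSup SS)).comp h1
    rw [hβ]
    exact ge_of_tendsto htend (Filter.Eventually.of_forall hseq)
  · -- unbounded case : the junk value `sSup SS = 0`
    rw [hβ, Real.sSup_of_not_bddAbove hbdd, Real.rpow_zero, mul_one]
    have h1 : St9.Lf μ r ≤ St9.Lf μ (Real.exp (-K)) := St9.Lf_anti μ hpos hk0.le hkr
    calc (St9.Lf μ r).toReal ≤ (St9.Lf μ (Real.exp (-K))).toReal :=
          ENNReal.toReal_mono hLfk_ne_top h1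
      _ = φK := hφKL.symm
      _ = Real.exp (-c) := hexpc.symm
end
end
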